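/- arXiv:2312.03473 — 4 statements merged into one kernel-verified Lean document; each statement's English description precedes it below -/
import Mathlib

section
/- Let K, K′ ⊆ ℝ^n be locally anti-blocking convex bodies. For σ ∈ {−1,1}^n write K_σ = K ∩ σℝ_+^n and K′_σ = K′ ∩ σℝ_+^n. Then Vol_n(K + K′) = Σ_{σ ∈ {−1,1}^n} Vol_n(K_σ + K′_σ). -/
open MeasureTheory
open scoped Pointwise

noncomputable section

/-- The nonnegative orthant `ℝ₊ⁿ`. -/
def nonnegOrthant (n : ℕ) : Set (EuclideanSpace ℝ (Fin n)) := {x | ∀ i, 0 ≤ x i}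

/-- The sign `±1` associated to a boolean. -/
def sgn (b : Bool) : ℝ := if b then 1 else -1

/-- The closed orthant `σ ℝ₊ⁿ` corresponding to a sign vector `σ ∈ {-1,1}ⁿ`. -/
def signedOrthant {n : ℕ} (σ : Fin n → Bool) : Set (EuclideanSpace ℝ (Fin n)) :=
  {x | ∀ i, 0 ≤ sgn (σ i) * x i}

/-- Coordinatewise reflection `σ S = {(σ₁x₁, …, σₙxₙ) : x ∈ S}`. -/
def sigmaAct {n : ℕ} (σ : Fin n → Bool) (S : Set (EuclideanSpace ℝ (Fin n))) :
    Set (EuclideanSpace ℝ (Fin n)) :=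
  (fun x => (WithLp.toLp 2 (fun i => sgn (σ i) * x i) : EuclideanSpace ℝ (Fin n))) '' S

/-- Orthogonal projection onto the coordinate subspace `span {eᵢ : i ∈ I}`. -/
def coordProj {n : ℕ} (I : Finset (Fin n)) (x : EuclideanSpace ℝ (Fin n)) :
    EuclideanSpace ℝ (Fin n) :=
  (WithLp.toLp 2 (fun i => if i ∈ I then x i else 0) : EuclideanSpace ℝ (Fin n))

/-- The coordinate subspace `span {eᵢ : i ∈ I}`, as a set. -/
def coordSubspace {n : ℕ} (I : Finset (Fin n)) : Set (EuclideanSpace ℝ (Fin n)) :=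
  {x | ∀ i ∉ I, x i = 0}

/-- A set `K ⊆ ℝ₊ⁿ` is anti-blocking if for every coordinate subspace `E` the orthogonal
projection `P_E K` equals the section `K ∩ E`. -/
def IsAntiBlocking {n : ℕ} (K : Set (EuclideanSpace ℝ (Fin n))) : Prop :=
  K ⊆ nonnegOrthant n ∧ ∀ I : Finset (Fin n), coordProj I '' K = K ∩ coordSubspace I

/-- `K` is locally anti-blocking if `(σK) ∩ ℝ₊ⁿ` is anti-blocking for every sign vector `σ`. -/
def IsLocallyAntiBlocking {n : ℕ} (K : Set (EuclideanSpace ℝ (Fin n))) : Prop :=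
  ∀ σ : Fin n → Bool, IsAntiBlocking (sigmaAct σ K ∩ nonnegOrthant n)

/-- The coordinate simplex `conv{0, e₁, …}` in the Euclidean space with coordinates `ι`. -/
def coordSimplex (ι : Type*) [Fintype ι] [DecidableEq ι] : Set (EuclideanSpace ℝ ι) :=
  convexHull ℝ (insert 0 (Set.range fun i : ι => EuclideanSpace.single i (1 : ℝ)))

/-- Restriction to the coordinates in `I`, realizing the orthogonal projection onto
`span {eᵢ : i ∈ I}` as a map onto a `#I`-dimensional Euclidean space (so that volumes of
images compute lower-dimensional Lebesgue measures of coordinate projections). -/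
def restrictCoords {n : ℕ} (I : Finset (Fin n)) (x : EuclideanSpace ℝ (Fin n)) :
    EuclideanSpace ℝ ↥I :=
  (WithLp.toLp 2 (fun i => x i) : EuclideanSpace ℝ ↥I)

lemma sgn_ne_zero (b : Bool) : sgn b ≠ 0 := by cases b <;> norm_num [sgn]

/-- Zeroing out one coordinate keeps us in a locally anti-blocking body. -/
lemma proj_mem {n : ℕ} {K : Set (EuclideanSpace ℝ (Fin n))}
    (hK : IsLocallyAntiBlocking K) {x : EuclideanSpace ℝ (Fin n)} (hx : x ∈ K) (i : Fin n) :
    (WithLp.toLp 2 (fun j => if j = i then 0 else x j) : EuclideanSpace ℝ (Fin n)) ∈ K := by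
  classical
  set τ : Fin n → Bool := fun j => decide (0 ≤ x j) with hτ
  obtain ⟨-, hproj⟩ := hK τ
  set w : EuclideanSpace ℝ (Fin n) := (WithLp.toLp 2 (fun j => sgn (τ j) * x j) : EuclideanSpace ℝ (Fin n)) with hw
  have hwK : w ∈ sigmaAct τ K ∩ nonnegOrthant n := by
    refine ⟨⟨x, hx, rfl⟩, fun j => ?_⟩
    by_cases h : 0 ≤ x j
    · simp only [hw, hτ, sgn, h, decide_true, if_true, WithLp.ofLp_toLp]; linarith
    · push_neg at h
      simp only [hw, hτ, sgn, h.not_ge, decide_false, if_false, WithLp.ofLp_toLp]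
      norm_num; linarith
  set I : Finset (Fin n) := Finset.univ.erase i with hI
  have h1 : coordProj I w ∈ (sigmaAct τ K ∩ nonnegOrthant n) ∩ coordSubspace I := by
    rw [← hproj I]; exact ⟨w, hwK, rfl⟩
  obtain ⟨u, huK, huw⟩ := h1.1.1
  have hu : u = (WithLp.toLp 2 (fun j => if j = i then 0 else x j) : EuclideanSpace ℝ (Fin n)) := by
    ext j
    have hj : sgn (τ j) * u j = coordProj I w j := congrArg (fun v => v j) huw
    have hRHS : coordProj I w j = sgn (τ j) * (if j = i then 0 else x j) := by
      simp only [coordProj, hI, Finset.mem_erase, Finset.mem_univ, and_true, hw]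
      by_cases h : j = i <;> simp [h]
    exact mul_left_cancel₀ (sgn_ne_zero (τ j)) (hj.trans hRHS)
  exact hu ▸ huK

/-- Scaling one coordinate towards 0 keeps us in a convex locally anti-blocking body. -/
lemma scale_mem {n : ℕ} {K : Set (EuclideanSpace ℝ (Fin n))} (hKc : Convex ℝ K)
    (hK : IsLocallyAntiBlocking K) {x : EuclideanSpace ℝ (Fin n)} (hx : x ∈ K) (i : Fin n)
    {t : ℝ} (ht0 : 0 ≤ t) (ht1 : t ≤ 1) :
    (WithLp.toLp 2 (fun j => if j = i then t * x j else x j) : EuclideanSpace ℝ (Fin n)) ∈ K := by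
  set Px : EuclideanSpace ℝ (Fin n) := (WithLp.toLp 2 (fun j => if j = i then 0 else x j) : EuclideanSpace ℝ (Fin n)) with hPxdef
  have hPx : Px ∈ K := proj_mem hK hx i
  have hmem := hKc hx hPx ht0 (by linarith : (0:ℝ) ≤ 1 - t) (by ring)
  have : (WithLp.toLp 2 (fun j => if j = i then t * x j else x j) : EuclideanSpace ℝ (Fin n))
      = t • x + (1 - t) • Px := by
    ext j
    simp only [PiLp.add_apply, PiLp.smul_apply, smul_eq_mul, hPxdef]
    by_cases h : j = i <;> simp [h] <;> ring
  rw [this]; exact hmem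

/-- One step: fix coordinate `i` when `x` has the wrong sign there. -/
lemma fix_coord {n : ℕ} {K K' : Set (EuclideanSpace ℝ (Fin n))}
    (hKc : Convex ℝ K) (hKlab : IsLocallyAntiBlocking K)
    (hK'c : Convex ℝ K') (hK'lab : IsLocallyAntiBlocking K')
    {σ : Fin n → Bool} {x y z : EuclideanSpace ℝ (Fin n)}
    (hx : x ∈ K) (hy : y ∈ K') (hxyz : x + y = z) (i : Fin n)
    (hz : 0 ≤ sgn (σ i) * z i) (hneg : sgn (σ i) * x i < 0) :
    ∃ x' ∈ K, ∃ y' ∈ K', x' + y' = z ∧ 0 ≤ sgn (σ i) * x' i ∧ 0 ≤ sgn (σ i) * y' i ∧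
      ∀ j, j ≠ i → x' j = x j ∧ y' j = y j := by
  set s := sgn (σ i) with hs
  have hzi : x i + y i = z i := by rw [← hxyz]; rfl
  have hzi' : s * x i + s * y i = s * z i := by rw [← hzi]; ring
  have hyi : 0 < s * y i := by linarith
  have hyne : y i ≠ 0 := by intro h; rw [h] at hyi; simp at hyi
  set t : ℝ := z i / y i with ht
  have hts : t = (s * z i) / (s * y i) := by
    rw [ht, mul_div_mul_left _ _ (sgn_ne_zero (σ i))]
  have ht0 : 0 ≤ t := by rw [hts]; positivity
  have ht1 : t ≤ 1 := by
    rw [hts, div_le_one hyi]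
    linarith
  refine ⟨(WithLp.toLp 2 (fun j => if j = i then 0 else x j) : EuclideanSpace ℝ (Fin n)), proj_mem hKlab hx i,
    (WithLp.toLp 2 (fun j => if j = i then t * y j else y j) : EuclideanSpace ℝ (Fin n)),
    scale_mem hK'c hK'lab hy i ht0 ht1, ?_, ?_, ?_, ?_⟩
  · ext j
    have : x j + y j = z j := by rw [← hxyz]; rfl
    show (if j = i then 0 else x j) + (if j = i then t * y j else y j) = z j
    by_cases h : j = i
    · subst h; simp [ht, div_mul_cancel₀ _ hyne]
    · simp [h, this]
  · simp
  · have : (if i = i then t * y i else y i) = t * y i := by simp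
    show 0 ≤ s * (if i = i then t * y i else y i)
    rw [this]
    have : s * (t * y i) = t * (s * y i) := by ring
    rw [this]
    positivity
  · intro j hj; simp [hj]

lemma decomp {n : ℕ} {K K' : Set (EuclideanSpace ℝ (Fin n))}
    (hKc : Convex ℝ K) (hKlab : IsLocallyAntiBlocking K)
    (hK'c : Convex ℝ K') (hK'lab : IsLocallyAntiBlocking K') (σ : Fin n → Bool) :
    (K ∩ signedOrthant σ) + (K' ∩ signedOrthant σ) = (K + K') ∩ signedOrthant σ := by
  classical
  apply Set.Subset.antisymm
  · rintro z ⟨x, ⟨hxK, hxO⟩, y, ⟨hyK, hyO⟩, rfl⟩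
    refine ⟨⟨x, hxK, y, hyK, rfl⟩, fun i => ?_⟩
    have : sgn (σ i) * (x + y) i = sgn (σ i) * x i + sgn (σ i) * y i := by
      show sgn (σ i) * (x i + y i) = _; ring
    rw [this]
    exact add_nonneg (hxO i) (hyO i)
  · rintro z ⟨⟨x, hx, y, hy, hxyz⟩, hzO⟩
    -- induct over coordinates
    have key : ∀ S : Finset (Fin n), ∀ x ∈ K, ∀ y ∈ K', x + y = z →
        ∃ x' ∈ K, ∃ y' ∈ K', x' + y' = z ∧
          ∀ j ∈ S, 0 ≤ sgn (σ j) * x' j ∧ 0 ≤ sgn (σ j) * y' j := by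
      intro S
      induction S using Finset.induction_on with
      | empty => intro x hx y hy hxy; exact ⟨x, hx, y, hy, hxy, by simp⟩
      | @insert i S hiS ih =>
        intro x₀ hx₀ y₀ hy₀ hxy₀
        obtain ⟨x, hx, y, hy, hxy, hS⟩ := ih x₀ hx₀ y₀ hy₀ hxy₀
        have hz : 0 ≤ sgn (σ i) * z i := hzO i
        by_cases h1 : 0 ≤ sgn (σ i) * x i
        · by_cases h2 : 0 ≤ sgn (σ i) * y i
          · refine ⟨x, hx, y, hy, hxy, fun j hj => ?_⟩
            rcases Finset.mem_insert.mp hj with rfl | hj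
            · exact ⟨h1, h2⟩
            · exact hS j hj
          · push_neg at h2
            obtain ⟨y', hy', x', hx', hxy', hy'i, hx'i, hfix⟩ :=
              fix_coord hK'c hK'lab hKc hKlab hy hx (by rw [← hxy]; exact add_comm y x) i hz h2
            refine ⟨x', hx', y', hy', by rw [← hxy']; exact add_comm x' y', fun j hj => ?_⟩
            rcases Finset.mem_insert.mp hj with rfl | hj
            · exact ⟨hx'i, hy'i⟩
            · obtain ⟨h4, h3⟩ := hfix j (fun h => hiS (h ▸ hj))
              rw [h3, h4]; exact hS j hj
        · push_neg at h1
          obtain ⟨x', hx', y', hy', hxy', hx'i, hy'i, hfix⟩ :=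
            fix_coord hKc hKlab hK'c hK'lab hx hy hxy i hz h1
          refine ⟨x', hx', y', hy', hxy', fun j hj => ?_⟩
          rcases Finset.mem_insert.mp hj with rfl | hj
          · exact ⟨hx'i, hy'i⟩
          · obtain ⟨h3, h4⟩ := hfix j (fun h => hiS (h ▸ hj))
            rw [h3, h4]; exact hS j hj
    obtain ⟨x', hx', y', hy', hxy', hall⟩ := key Finset.univ x hx y hy hxyz
    exact ⟨x', ⟨hx', fun j => (hall j (Finset.mem_univ j)).1⟩,
      y', ⟨hy', fun j => (hall j (Finset.mem_univ j)).2⟩, hxy'⟩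

lemma hyperplane_null {n : ℕ} (i : Fin n) :
    volume {x : EuclideanSpace ℝ (Fin n) | x i = 0} = 0 := by
  have h : {x : EuclideanSpace ℝ (Fin n) | x i = 0}
      = (LinearMap.ker ((EuclideanSpace.proj i : EuclideanSpace ℝ (Fin n) →L[ℝ] ℝ) : EuclideanSpace ℝ (Fin n) →ₗ[ℝ] ℝ) : Set (EuclideanSpace ℝ (Fin n))) := by
    ext x; simp [LinearMap.mem_ker]
  rw [h]
  apply Measure.addHaar_submodule
  intro htop
  have h1 : EuclideanSpace.single i (1:ℝ) ∈ (⊤ : Submodule ℝ (EuclideanSpace ℝ (Fin n))) :=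
    Submodule.mem_top
  rw [← htop, LinearMap.mem_ker] at h1
  simp [EuclideanSpace.single_apply] at h1

def openOrthant {n : ℕ} (σ : Fin n → Bool) : Set (EuclideanSpace ℝ (Fin n)) :=
  {x | ∀ i, 0 < sgn (σ i) * x i}

lemma measurable_openOrthant {n : ℕ} (σ : Fin n → Bool) :
    MeasurableSet (openOrthant σ) := by
  have : openOrthant σ = ⋂ i, {x : EuclideanSpace ℝ (Fin n) | 0 < sgn (σ i) * x i} := by
    ext x; simp [openOrthant, Set.mem_iInter]
  rw [this]
  refine MeasurableSet.iInter fun i => ?_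
  have hc : Continuous fun x : EuclideanSpace ℝ (Fin n) => sgn (σ i) * x i :=
    continuous_const.mul (EuclideanSpace.proj i).continuous
  exact measurableSet_lt measurable_const hc.measurable

lemma measure_sum_orthants {n : ℕ} {S : Set (EuclideanSpace ℝ (Fin n))}
    (hS : MeasurableSet S) :
    volume S = ∑ σ : Fin n → Bool, volume (S ∩ signedOrthant σ) := by
  classical
  set N : Set (EuclideanSpace ℝ (Fin n)) := ⋃ i, {x | x i = 0} with hN
  have hNnull : volume N = 0 := measure_iUnion_null fun i => hyperplane_null i
  -- each summand equals the open-orthant version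
  have hsum : ∀ σ : Fin n → Bool,
      volume (S ∩ signedOrthant σ) = volume (S ∩ openOrthant σ) := by
    intro σ
    apply le_antisymm
    · have hsub : S ∩ signedOrthant σ ⊆ (S ∩ openOrthant σ) ∪ N := by
        rintro x ⟨hxS, hxO⟩
        by_cases h : ∀ i, x i ≠ 0
        · left
          refine ⟨hxS, fun i => lt_of_le_of_ne (hxO i) ?_⟩
          intro heq
          exact h i (by
            have := heq.symm
            rcases mul_eq_zero.mp this with h' | h'
            · exact absurd h' (sgn_ne_zero (σ i))
            · exact h')
        · right
          push_neg at h
          obtain ⟨i, hi⟩ := h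
          exact Set.mem_iUnion.mpr ⟨i, hi⟩
      calc volume (S ∩ signedOrthant σ) ≤ volume ((S ∩ openOrthant σ) ∪ N) :=
            measure_mono hsub
        _ ≤ volume (S ∩ openOrthant σ) + volume N := measure_union_le _ _
        _ = volume (S ∩ openOrthant σ) := by rw [hNnull, add_zero]
    · exact measure_mono (Set.inter_subset_inter_right S fun x hx i => (hx i).le)
  simp_rw [hsum]
  -- open orthants are pairwise disjoint and cover everything but N
  have hdisj : Pairwise (Function.onFun Disjoint fun σ : Fin n → Bool => S ∩ openOrthant σ) := by
    intro σ σ' hσ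
    refine Set.disjoint_left.mpr ?_
    rintro x ⟨-, hx⟩ ⟨-, hx'⟩
    obtain ⟨i, hi⟩ := Function.ne_iff.mp hσ
    have h1 := hx i
    have h2 := hx' i
    cases hσi : σ i <;> cases hσ'i : σ' i <;>
      rw [hσi] at h1 <;> rw [hσ'i] at h2 <;> simp [sgn] at h1 h2 hi <;>
      first
        | exact hi (hσi.trans hσ'i.symm)
        | linarith
  have hcover : S \ N ⊆ ⋃ σ : Fin n → Bool, S ∩ openOrthant σ := by
    rintro x ⟨hxS, hxN⟩
    refine Set.mem_iUnion.mpr ⟨fun i => decide (0 < x i), hxS, fun i => ?_⟩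
    have hne : x i ≠ 0 := fun h => hxN (Set.mem_iUnion.mpr ⟨i, h⟩)
    by_cases h : 0 < x i
    · simp [sgn, h]
    · have : x i < 0 := lt_of_le_of_ne (not_lt.mp h) hne
      simp [sgn, h]
      linarith
  have hU : volume (⋃ σ : Fin n → Bool, S ∩ openOrthant σ)
      = ∑' σ : Fin n → Bool, volume (S ∩ openOrthant σ) :=
    measure_iUnion hdisj fun σ => hS.inter (measurable_openOrthant σ)
  have hle1 : volume S ≤ ∑ σ : Fin n → Bool, volume (S ∩ openOrthant σ) := by
    calc volume S ≤ volume ((S \ N) ∪ N) := measure_mono (by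
          intro x hx; by_cases h : x ∈ N
          · exact Or.inr h
          · exact Or.inl ⟨hx, h⟩)
      _ ≤ volume (S \ N) + volume N := measure_union_le _ _
      _ = volume (S \ N) := by rw [hNnull, add_zero]
      _ ≤ volume (⋃ σ : Fin n → Bool, S ∩ openOrthant σ) := measure_mono hcover
      _ = ∑' σ : Fin n → Bool, volume (S ∩ openOrthant σ) := hU
      _ = ∑ σ : Fin n → Bool, volume (S ∩ openOrthant σ) := tsum_fintype _
  have hle2 : ∑ σ : Fin n → Bool, volume (S ∩ openOrthant σ) ≤ volume S := by
    rw [← hU.trans (tsum_fintype _)]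
    exact measure_mono (Set.iUnion_subset fun σ => Set.inter_subset_left)
  exact le_antisymm hle1 hle2


/-- For locally anti-blocking bodies `K, K' ⊆ ℝⁿ`,
`Vol(K + K') = ∑_{σ ∈ {-1,1}ⁿ} Vol(K_σ + K'_σ)` where `K_σ = K ∩ σℝ₊ⁿ`. -/
theorem volume_add_locally_antiblocking
    (n : ℕ) (K K' : Set (EuclideanSpace ℝ (Fin n)))
    (hKconv : Convex ℝ K) (hKcomp : IsCompact K) (hKne : K.Nonempty)
    (hKlab : IsLocallyAntiBlocking K)
    (hK'conv : Convex ℝ K') (hK'comp : IsCompact K') (hK'ne : K'.Nonempty)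
    (hK'lab : IsLocallyAntiBlocking K') :
    volume (K + K') =
      ∑ σ : Fin n → Bool, volume ((K ∩ signedOrthant σ) + (K' ∩ signedOrthant σ)) := by
  have hd : ∀ σ : Fin n → Bool,
      (K ∩ signedOrthant σ) + (K' ∩ signedOrthant σ) = (K + K') ∩ signedOrthant σ :=
    decomp hKconv hKlab hK'conv hK'lab
  simp_rw [hd]
  exact measure_sum_orthants (hKcomp.add hK'comp).measurableSet
end
end

section
/- Let K, K′ ⊆ ℝ^n be locally anti-blocking convex bodies and let 0 ≤ j ≤ n. For σ ∈ {−1,1}^n write K_σ = K ∩ σℝ_+^n and K′_σ = K′ ∩ σℝ_+^n. Then V_n(K[j], K′[n−j]) = Σ_{σ ∈ {−1,1}^n} V_n(K_σ[j], K′_σ[n−j]). -/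
open MeasureTheory
open scoped Pointwise

noncomputable section

/-- `V A B` lists the mixed volumes `Vₙ(A[j], B[n-j])` of two convex bodies, characterized by
the Minkowski polynomial expansion. -/
def IsMixedVolFn (n : ℕ)
    (V : Set (EuclideanSpace ℝ (Fin n)) → Set (EuclideanSpace ℝ (Fin n)) → ℕ → ℝ) : Prop :=
  ∀ A B : Set (EuclideanSpace ℝ (Fin n)), Convex ℝ A → IsCompact A → A.Nonempty →
    Convex ℝ B → IsCompact B → B.Nonempty →
    ∀ l m : ℝ, 0 ≤ l → 0 ≤ m →
      (volume (l • A + m • B)).toReal =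
        ∑ i ∈ Finset.range (n + 1), (n.choose i : ℝ) * l ^ i * m ^ (n - i) * V A B i


namespace MVAux

variable {n : ℕ}

local notation "Eu" => EuclideanSpace ℝ (Fin n)

/-- The reflection map as a function. -/
def sm (σ : Fin n → Bool) (x : Eu) : Eu := WithLp.toLp 2 (fun i => sgn (σ i) * x i)

lemma sgn_mul_self (b : Bool) : sgn b * sgn b = 1 := by cases b <;> norm_num [sgn]

lemma sm_apply (σ : Fin n → Bool) (x : Eu) (i : Fin n) : sm σ x i = sgn (σ i) * x i := rfl

lemma sm_sm (σ : Fin n → Bool) (x : Eu) : sm σ (sm σ x) = x := by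
  ext i
  show sgn (σ i) * (sgn (σ i) * x i) = x i
  rw [← mul_assoc, sgn_mul_self, one_mul]

lemma sigmaAct_eq (σ : Fin n → Bool) (S : Set Eu) : sigmaAct σ S = sm σ '' S := rfl

lemma mem_sigmaAct {σ : Fin n → Bool} {S : Set Eu} {x : Eu} :
    x ∈ sigmaAct σ S ↔ sm σ x ∈ S := by
  constructor
  · rintro ⟨y, hy, rfl⟩
    show sm σ (sm σ y) ∈ S
    rwa [sm_sm]
  · intro h; exact ⟨sm σ x, h, sm_sm σ x⟩

lemma sm_add (σ : Fin n → Bool) (x y : Eu) : sm σ (x + y) = sm σ x + sm σ y := by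
  ext i; exact mul_add _ _ _

lemma sm_smul (σ : Fin n → Bool) (c : ℝ) (x : Eu) : sm σ (c • x) = c • sm σ x := by
  ext i; exact mul_left_comm _ _ _

/-- The reflection map as a linear map. -/
def smLin (σ : Fin n → Bool) : Eu →ₗ[ℝ] Eu where
  toFun := sm σ
  map_add' := sm_add σ
  map_smul' := sm_smul σ

lemma convex_sigmaAct (σ : Fin n → Bool) {K : Set Eu} (hK : Convex ℝ K) :
    Convex ℝ (sigmaAct σ K) := by
  rw [sigmaAct_eq]
  exact hK.linear_image (smLin σ)

lemma convex_nonnegOrthant : Convex ℝ (nonnegOrthant n) := by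
  intro x hx y hy a b ha hb hab i
  show 0 ≤ a * x i + b * y i
  exact add_nonneg (mul_nonneg ha (hx i)) (mul_nonneg hb (hy i))

lemma convex_signedOrthant (σ : Fin n → Bool) : Convex ℝ (signedOrthant σ) := by
  intro x hx y hy a b ha hb hab i
  show 0 ≤ sgn (σ i) * (a * x i + b * y i)
  have h : sgn (σ i) * (a * x i + b * y i)
      = a * (sgn (σ i) * x i) + b * (sgn (σ i) * y i) := by ring
  rw [h]
  exact add_nonneg (mul_nonneg ha (hx i)) (mul_nonneg hb (hy i))

lemma continuous_coord (i : Fin n) : Continuous fun x : Eu => x i :=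
  (EuclideanSpace.proj i).continuous

lemma isClosed_signedOrthant (σ : Fin n → Bool) : IsClosed (signedOrthant σ) := by
  have h : signedOrthant σ = ⋂ i, (fun x : Eu => sgn (σ i) * x i) ⁻¹' Set.Ici 0 := by
    ext x; simp [signedOrthant, Set.mem_iInter, Set.mem_preimage, Set.mem_Ici]
  rw [h]
  exact isClosed_iInter fun i =>
    IsClosed.preimage (continuous_const.mul (continuous_coord i)) isClosed_Ici

lemma zero_mem_signedOrthant (σ : Fin n → Bool) : (0 : Eu) ∈ signedOrthant σ := by
  intro i
  show 0 ≤ sgn (σ i) * (0 : ℝ)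
  rw [mul_zero]

lemma antiBlocking_downclosed {A : Set Eu} (hA : IsAntiBlocking A) (hc : Convex ℝ A)
    {x : Eu} (hx : x ∈ A) {y : Eu} (h0 : ∀ i, 0 ≤ y i) (h1 : ∀ i, y i ≤ x i) : y ∈ A := by
  classical
  suffices H : ∀ s : Finset (Fin n), ∀ y : Eu, (∀ i, 0 ≤ y i) → (∀ i, y i ≤ x i) →
      (∀ i ∉ s, y i = x i) → y ∈ A by
    exact H Finset.univ y h0 h1 (fun i hi => absurd (Finset.mem_univ i) hi)
  intro s
  induction s using Finset.induction_on with
  | empty =>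
    intro y h0 h1 h2
    have : y = x := by ext i; exact h2 i (Finset.notMem_empty i)
    rwa [this]
  | @insert a s ha IH =>
    intro y h0 h1 h2
    by_cases hxa : x a = 0
    · apply IH y h0 h1
      intro i hi
      by_cases hia : i = a
      · subst hia
        have := h0 i; have := h1 i
        linarith [hxa ▸ (h1 i)]
      · exact h2 i (by simp [Finset.mem_insert, hia, hi])
    · have hya : 0 ≤ y a := h0 a
      have hxa' : 0 < x a := lt_of_le_of_ne (le_trans (h0 a) (h1 a)) (Ne.symm hxa)
      set y1 : Eu := WithLp.toLp 2 (fun i => if i = a then x i else y i) with hy1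
      have hy1A : y1 ∈ A := by
        apply IH y1
        · intro i
          show 0 ≤ if i = a then x i else y i
          split_ifs with h
          · exact le_trans (h0 i) (h1 i)
          · exact h0 i
        · intro i
          show (if i = a then x i else y i) ≤ x i
          split_ifs with h
          · exact le_refl _
          · exact h1 i
        · intro i hi
          show (if i = a then x i else y i) = x i
          split_ifs with h
          · rfl
          · exact h2 i (by simp [Finset.mem_insert, h, hi])
      set y0 : Eu := WithLp.toLp 2 (fun i => if i = a then 0 else y i) with hy0
      have hy0A : y0 ∈ A := by
        have heq : y0 = coordProj (Finset.univ.erase a) y1 := by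
          ext i
          show (if i = a then 0 else y i)
              = if i ∈ Finset.univ.erase a then y1 i else 0
          by_cases h : i = a
          · simp [h, Finset.mem_erase]
          · have h' : i ∈ Finset.univ.erase a := by simp [Finset.mem_erase, h]
            rw [if_neg h, if_pos h']
            simp [hy1, h]
        have hmem : y0 ∈ coordProj (Finset.univ.erase a) '' A := ⟨y1, hy1A, heq.symm⟩
        rw [hA.2] at hmem
        exact hmem.1
      set t : ℝ := y a / x a with ht
      have ht0 : 0 ≤ t := div_nonneg hya hxa'.le
      have ht1 : t ≤ 1 := (div_le_one hxa').mpr (h1 a)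
      have hmem := hc hy0A hy1A (sub_nonneg.mpr ht1) ht0 (by ring)
      have hyeq : y = (1 - t) • y0 + t • y1 := by
        ext i
        show y i = (1 - t) * (if i = a then 0 else y i) + t * (if i = a then x i else y i)
        by_cases h : i = a
        · subst h
          rw [if_pos rfl, if_pos rfl, mul_zero, zero_add, ht]
          field_simp
        · rw [if_neg h, if_neg h]; ring
      rwa [hyeq]

lemma zero_mem_of_lab {K : Set Eu} (hK : IsLocallyAntiBlocking K) (hne : K.Nonempty) :
    (0 : Eu) ∈ K := by
  classical
  obtain ⟨x, hx⟩ := hne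
  set τ : Fin n → Bool := fun i => decide (0 ≤ x i) with hτ
  have h1 : sm τ x ∈ sigmaAct τ K ∩ nonnegOrthant n := by
    refine ⟨⟨x, hx, rfl⟩, fun i => ?_⟩
    show 0 ≤ sgn (τ i) * x i
    have hτi : τ i = decide (0 ≤ x i) := rfl
    by_cases h : 0 ≤ x i
    · rw [hτi, decide_eq_true h, show sgn true = (1 : ℝ) from rfl, one_mul]
      exact h
    · rw [hτi, decide_eq_false h, show sgn false = (-1 : ℝ) from rfl, neg_one_mul]
      push_neg at h
      linarith
  have h2 := (hK τ).2 ∅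
  have hproj : coordProj (∅ : Finset (Fin n)) (sm τ x) = 0 := by
    ext i
    show (if i ∈ (∅ : Finset (Fin n)) then sm τ x i else 0) = 0
    simp
  have h0' : (0 : Eu) ∈ (sigmaAct τ K ∩ nonnegOrthant n) ∩ coordSubspace ∅ := by
    rw [← h2]
    exact ⟨sm τ x, h1, hproj⟩
  have h0 : (0 : Eu) ∈ sigmaAct τ K ∩ nonnegOrthant n := h0'.1
  have h3 := mem_sigmaAct.mp h0.1
  have h4 : sm τ (0 : Eu) = 0 := by
    ext i; exact mul_zero _
  rwa [h4] at h3

lemma sgn_not (b : Bool) : sgn (!b) = -sgn b := by cases b <;> simp [sgn]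

lemma clamp_mem {K : Set Eu} (hK : IsLocallyAntiBlocking K) (σ : Fin n → Bool)
    {y : Eu} (hy : y ∈ K) :
    WithLp.toLp 2 (fun i => if 0 ≤ sgn (σ i) * y i then y i else 0) ∈ K ∩ signedOrthant σ := by
  classical
  set ρ : Fin n → Bool := fun i => if 0 ≤ sgn (σ i) * y i then σ i else !(σ i) with hρ
  have hsgnρ : ∀ i, sgn (ρ i) = if 0 ≤ sgn (σ i) * y i then sgn (σ i) else -sgn (σ i) := by
    intro i
    by_cases h : 0 ≤ sgn (σ i) * y i <;> simp [hρ, h, sgn_not]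
  have hmemρ : sm ρ y ∈ sigmaAct ρ K ∩ nonnegOrthant n := by
    refine ⟨⟨y, hy, rfl⟩, fun i => ?_⟩
    show 0 ≤ sgn (ρ i) * y i
    rw [hsgnρ i]
    by_cases h : 0 ≤ sgn (σ i) * y i
    · rwa [if_pos h]
    · rw [if_neg h, neg_mul]
      push_neg at h
      linarith
  set I : Finset (Fin n) := Finset.univ.filter (fun i => 0 ≤ sgn (σ i) * y i) with hI
  have h2 := (hK ρ).2 I
  have hw : coordProj I (sm ρ y) ∈ (sigmaAct ρ K ∩ nonnegOrthant n) ∩ coordSubspace I := by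
    rw [← h2]
    exact ⟨sm ρ y, hmemρ, rfl⟩
  have hfinal : sm ρ (coordProj I (sm ρ y)) ∈ K := mem_sigmaAct.mp hw.1.1
  have heq : sm ρ (coordProj I (sm ρ y))
      = WithLp.toLp 2 (fun i => if 0 ≤ sgn (σ i) * y i then y i else 0) := by
    ext i
    show sgn (ρ i) * (if i ∈ I then sgn (ρ i) * y i else 0)
        = if 0 ≤ sgn (σ i) * y i then y i else 0
    by_cases h : 0 ≤ sgn (σ i) * y i
    · have hiI : i ∈ I := by simp [hI, h]
      rw [if_pos hiI, if_pos h, ← mul_assoc, sgn_mul_self, one_mul]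
    · have hiI : i ∉ I := by simp [hI, h]
      rw [if_neg hiI, if_neg h, mul_zero]
  rw [heq] at hfinal
  refine ⟨hfinal, fun i => ?_⟩
  show 0 ≤ sgn (σ i) * (if 0 ≤ sgn (σ i) * y i then y i else 0)
  by_cases h : 0 ≤ sgn (σ i) * y i
  · rwa [if_pos h]
  · rw [if_neg h, mul_zero]

lemma downclosed_orthant {K : Set Eu} (hK : IsLocallyAntiBlocking K) (hc : Convex ℝ K)
    (σ : Fin n → Bool) {x u : Eu} (hxK : x ∈ K) (hxO : x ∈ signedOrthant σ)
    (h0 : ∀ i, 0 ≤ sgn (σ i) * u i) (h1 : ∀ i, sgn (σ i) * u i ≤ sgn (σ i) * x i) :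
    u ∈ K ∩ signedOrthant σ := by
  have hA := hK σ
  have hAc : Convex ℝ (sigmaAct σ K ∩ nonnegOrthant n) :=
    (convex_sigmaAct σ hc).inter convex_nonnegOrthant
  have hxA : sm σ x ∈ sigmaAct σ K ∩ nonnegOrthant n := ⟨⟨x, hxK, rfl⟩, fun i => hxO i⟩
  have hmem := antiBlocking_downclosed hA hAc hxA (y := sm σ u)
    (fun i => h0 i) (fun i => h1 i)
  have huK : u ∈ K := by
    have h := mem_sigmaAct.mp hmem.1
    rwa [sm_sm] at h
  exact ⟨huK, h0⟩

lemma add_inter_orthant {K K' : Set Eu} (hK : IsLocallyAntiBlocking K) (hKc : Convex ℝ K)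
    (hK' : IsLocallyAntiBlocking K') (hK'c : Convex ℝ K') (σ : Fin n → Bool) :
    (K + K') ∩ signedOrthant σ = (K ∩ signedOrthant σ) + (K' ∩ signedOrthant σ) := by
  classical
  ext x
  constructor
  · rintro ⟨hx, hxO⟩
    rw [Set.mem_add] at hx
    obtain ⟨y, hy, z, hz, rfl⟩ := hx
    have hyp := clamp_mem hK σ hy
    have hzp := clamp_mem hK' σ hz
    set yp : Eu := WithLp.toLp 2 (fun i => if 0 ≤ sgn (σ i) * y i then y i else 0) with hypdef
    set zp : Eu := WithLp.toLp 2 (fun i => if 0 ≤ sgn (σ i) * z i then z i else 0) with hzpdef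
    set y' : Eu :=
      WithLp.toLp 2 (fun i => if sgn (σ i) * yp i ≤ sgn (σ i) * (y i + z i) then yp i else y i + z i)
      with hy'def
    have hy'val : ∀ i, y' i
        = if sgn (σ i) * yp i ≤ sgn (σ i) * (y i + z i) then yp i else y i + z i := by
      intro i; rw [hy'def]
    have hypval : ∀ i, yp i = if 0 ≤ sgn (σ i) * y i then y i else 0 := by
      intro i; rw [hypdef]
    have hzpval : ∀ i, zp i = if 0 ≤ sgn (σ i) * z i then z i else 0 := by
      intro i; rw [hzpdef]
    -- basic coordinate facts
    have hB : ∀ i, 0 ≤ sgn (σ i) * (y i + z i) := fun i => hxO i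
    have hA0 : ∀ i, 0 ≤ sgn (σ i) * yp i := fun i => hyp.2 i
    have hC0 : ∀ i, 0 ≤ sgn (σ i) * zp i := fun i => hzp.2 i
    have hyle : ∀ i, sgn (σ i) * y i ≤ sgn (σ i) * yp i := by
      intro i
      rw [hypval i]
      by_cases h : 0 ≤ sgn (σ i) * y i
      · rw [if_pos h]
      · rw [if_neg h, mul_zero]
        push_neg at h
        linarith
    have hzle : ∀ i, sgn (σ i) * z i ≤ sgn (σ i) * zp i := by
      intro i
      rw [hzpval i]
      by_cases h : 0 ≤ sgn (σ i) * z i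
      · rw [if_pos h]
      · rw [if_neg h, mul_zero]
        push_neg at h
        linarith
    -- y' is in K ∩ O
    have hy'mem : y' ∈ K ∩ signedOrthant σ := by
      apply downclosed_orthant hK hKc σ hyp.1 hyp.2
      · intro i
        rw [hy'val i]
        by_cases h : sgn (σ i) * yp i ≤ sgn (σ i) * (y i + z i)
        · rw [if_pos h]; exact hA0 i
        · rw [if_neg h]; exact hB i
      · intro i
        rw [hy'val i]
        by_cases h : sgn (σ i) * yp i ≤ sgn (σ i) * (y i + z i)
        · rw [if_pos h]
        · rw [if_neg h]
          push_neg at h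
          linarith
    -- z' is in K' ∩ O
    have hz'mem : (y + z - y') ∈ K' ∩ signedOrthant σ := by
      apply downclosed_orthant hK' hK'c σ hzp.1 hzp.2
      · intro i
        have hzi : sgn (σ i) * (y + z - y') i
            = sgn (σ i) * (y i + z i) - sgn (σ i) * y' i := by
          show sgn (σ i) * (y i + z i - y' i) = _
          ring
        rw [hzi, hy'val i]
        by_cases h : sgn (σ i) * yp i ≤ sgn (σ i) * (y i + z i)
        · rw [if_pos h]; linarith
        · rw [if_neg h]; linarith
      · intro i
        have hzi : sgn (σ i) * (y + z - y') i
            = sgn (σ i) * (y i + z i) - sgn (σ i) * y' i := by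
          show sgn (σ i) * (y i + z i - y' i) = _
          ring
        rw [hzi, hy'val i]
        by_cases h : sgn (σ i) * yp i ≤ sgn (σ i) * (y i + z i)
        · rw [if_pos h]
          have hmy : sgn (σ i) * (y i + z i) = sgn (σ i) * y i + sgn (σ i) * z i := by ring
          have := hyle i
          have := hzle i
          rw [hmy]
          linarith
        · rw [if_neg h]
          have : sgn (σ i) * (y i + z i) - sgn (σ i) * (y i + z i) = 0 := by ring
          rw [this]
          exact hC0 i
    rw [Set.mem_add]
    exact ⟨y', hy'mem, y + z - y', hz'mem, by abel⟩
  · rw [Set.mem_add]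
    rintro ⟨y, ⟨hyK, hyO⟩, z, ⟨hzK, hzO⟩, rfl⟩
    refine ⟨Set.mem_add.mpr ⟨y, hyK, z, hzK, rfl⟩, fun i => ?_⟩
    show 0 ≤ sgn (σ i) * (y i + z i)
    have h : sgn (σ i) * (y i + z i) = sgn (σ i) * y i + sgn (σ i) * z i := by ring
    rw [h]
    exact add_nonneg (hyO i) (hzO i)

lemma signedOrthant_true : signedOrthant (fun _ : Fin n => true) = nonnegOrthant n := by
  ext x
  constructor
  · intro h i
    have := h i
    simpa [sgn] using this
  · intro h i
    simpa [sgn] using h i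

lemma smul_sigmaAct (σ : Fin n → Bool) (l : ℝ) (K : Set Eu) :
    sigmaAct σ (l • K) = l • sigmaAct σ K := by
  ext x
  constructor
  · rintro ⟨w, ⟨k, hk, rfl⟩, rfl⟩
    exact ⟨sm σ k, ⟨k, hk, rfl⟩, (sm_smul σ l k).symm⟩
  · rintro ⟨w, ⟨k, hk, rfl⟩, rfl⟩
    exact ⟨l • k, ⟨k, hk, rfl⟩, sm_smul σ l k⟩

lemma smul_inter_orthant {K : Set Eu} {l : ℝ} (hl : 0 < l) (σ : Fin n → Bool) :
    (l • K) ∩ signedOrthant σ = l • (K ∩ signedOrthant σ) := by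
  ext x
  constructor
  · rintro ⟨⟨k, hk, rfl⟩, hO⟩
    refine ⟨k, ⟨hk, fun i => ?_⟩, rfl⟩
    have h1 : 0 ≤ sgn (σ i) * (l * k i) := hO i
    have h2 : sgn (σ i) * (l * k i) = l * (sgn (σ i) * k i) := by ring
    rw [h2] at h1
    nlinarith
  · rintro ⟨k, ⟨hkK, hkO⟩, rfl⟩
    refine ⟨⟨k, hkK, rfl⟩, fun i => ?_⟩
    show 0 ≤ sgn (σ i) * (l * k i)
    have h2 : sgn (σ i) * (l * k i) = l * (sgn (σ i) * k i) := by ring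
    rw [h2]
    exact mul_nonneg hl.le (hkO i)

lemma smul_coordProj (I : Finset (Fin n)) (l : ℝ) (x : Eu) :
    coordProj I (l • x) = l • coordProj I x := by
  ext i
  show (if i ∈ I then l * x i else 0) = l * (if i ∈ I then x i else 0)
  split_ifs
  · rfl
  · rw [mul_zero]

lemma smul_antiBlocking {A : Set Eu} {l : ℝ} (hl : 0 < l) (hA : IsAntiBlocking A) :
    IsAntiBlocking (l • A) := by
  constructor
  · rintro x ⟨a, ha, rfl⟩ i
    show 0 ≤ l * a i
    exact mul_nonneg hl.le (hA.1 ha i)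
  · intro I
    ext x
    constructor
    · rintro ⟨w, ⟨a, ha, rfl⟩, rfl⟩
      have h1 : coordProj I a ∈ A ∩ coordSubspace I := by
        rw [← hA.2]
        exact ⟨a, ha, rfl⟩
      refine ⟨⟨coordProj I a, h1.1, (smul_coordProj I l a).symm⟩, fun i hi => ?_⟩
      show (if i ∈ I then (l • a) i else 0) = 0
      rw [if_neg hi]
    · rintro ⟨⟨a, ha, rfl⟩, hxE⟩
      have haE : a ∈ coordSubspace I := by
        intro i hi
        have h := hxE i hi
        have h2 : l * a i = 0 := h
        exact (mul_eq_zero.mp h2).resolve_left hl.ne'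
      have h3 : a ∈ coordProj I '' A := by
        rw [hA.2]
        exact ⟨ha, haE⟩
      obtain ⟨b, hb, hba⟩ := h3
      exact ⟨l • b, ⟨b, hb, rfl⟩, by rw [smul_coordProj, hba]⟩

lemma smul_lab {K : Set Eu} {l : ℝ} (hl : 0 < l) (hK : IsLocallyAntiBlocking K) :
    IsLocallyAntiBlocking (l • K) := by
  intro τ
  rw [smul_sigmaAct, ← signedOrthant_true, smul_inter_orthant hl, signedOrthant_true]
  exact smul_antiBlocking hl (hK τ)

lemma volume_hyperplane (i : Fin n) : volume {x : Eu | x i = 0} = 0 := by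
  let φ : Eu →ₗ[ℝ] ℝ :=
    { toFun := fun x => x i, map_add' := fun x y => rfl, map_smul' := fun c x => rfl }
  have h1 : {x : Eu | x i = 0} = (LinearMap.ker φ : Set Eu) := by
    ext x
    simp only [Set.mem_setOf_eq, SetLike.mem_coe, LinearMap.mem_ker]
    rfl
  rw [h1]
  apply Measure.addHaar_submodule
  intro h
  have hmem : EuclideanSpace.single i (1 : ℝ) ∈ LinearMap.ker φ := by
    rw [h]; trivial
  have h2 : φ (EuclideanSpace.single i (1 : ℝ)) = 0 := LinearMap.mem_ker.mp hmem
  have h3 : φ (EuclideanSpace.single i (1 : ℝ)) = 1 := by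
    show EuclideanSpace.single i (1 : ℝ) i = 1
    simp [EuclideanSpace.single_apply]
  rw [h3] at h2
  exact one_ne_zero h2

lemma isClosed_coordZero (i : Fin n) : IsClosed {x : Eu | x i = 0} :=
  isClosed_eq (continuous_coord i) continuous_const

lemma volume_eq_sum_orthants {S : Set Eu} (hS : MeasurableSet S) :
    volume S = ∑ σ : Fin n → Bool, volume (S ∩ signedOrthant σ) := by
  classical
  set H : Set Eu := ⋃ i : Fin n, {x : Eu | x i = 0} with hH
  have hH0 : volume H = 0 := measure_iUnion_null fun i => volume_hyperplane i
  have hHm : MeasurableSet H := MeasurableSet.iUnion fun i => (isClosed_coordZero i).measurableSet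
  set f : (Fin n → Bool) → Set Eu := fun σ => (S ∩ signedOrthant σ) \ H with hf
  have hfm : ∀ σ, MeasurableSet (f σ) := fun σ =>
    (hS.inter (isClosed_signedOrthant σ).measurableSet).diff hHm
  have hdisj : Pairwise (Function.onFun Disjoint f) := by
    intro σ τ hστ
    rw [Function.onFun, Set.disjoint_left]
    rintro x ⟨⟨_, hxσ⟩, hxH⟩ hmem2
    obtain ⟨⟨_, hxτ⟩, _⟩ := hmem2
    have hex : ∃ i, σ i ≠ τ i := by
      by_contra h
      push_neg at h
      exact hστ (funext h)
    obtain ⟨i, hi⟩ := hex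
    have h1 := hxσ i
    have h2 := hxτ i
    have hx0 : x i = 0 := by
      rcases Bool.eq_false_or_eq_true (σ i) with hσ | hσ <;>
        rcases Bool.eq_false_or_eq_true (τ i) with hτ | hτ
      · exact absurd (hσ.trans hτ.symm) hi
      · rw [hσ] at h1; rw [hτ] at h2
        simp only [sgn, if_false, if_true, neg_mul, one_mul, neg_nonneg, Bool.false_eq_true] at h1 h2
        linarith
      · rw [hσ] at h1; rw [hτ] at h2
        simp only [sgn, if_false, if_true, neg_mul, one_mul, neg_nonneg, Bool.false_eq_true] at h1 h2
        linarith
      · exact absurd (hσ.trans hτ.symm) hi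
    exact hxH (Set.mem_iUnion.mpr ⟨i, hx0⟩)
  have hun : ⋃ σ : Fin n → Bool, f σ = S \ H := by
    ext x
    simp only [hf, Set.mem_iUnion, Set.mem_diff, Set.mem_inter_iff]
    constructor
    · rintro ⟨σ, ⟨hxS, _⟩, hxH⟩
      exact ⟨hxS, hxH⟩
    · rintro ⟨hxS, hxH⟩
      refine ⟨fun i => decide (0 ≤ x i), ⟨hxS, fun i => ?_⟩, hxH⟩
      show 0 ≤ sgn (decide (0 ≤ x i)) * x i
      by_cases h : 0 ≤ x i
      · rw [decide_eq_true h, show sgn true = (1 : ℝ) from rfl, one_mul]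
        exact h
      · rw [decide_eq_false h, show sgn false = (-1 : ℝ) from rfl, neg_one_mul]
        push_neg at h
        linarith
  calc volume S = volume (S \ H) := (measure_diff_null hH0).symm
    _ = volume (⋃ σ, f σ) := by rw [hun]
    _ = ∑' σ, volume (f σ) := measure_iUnion hdisj hfm
    _ = ∑ σ : Fin n → Bool, volume (f σ) := tsum_fintype _
    _ = ∑ σ : Fin n → Bool, volume (S ∩ signedOrthant σ) :=
        Finset.sum_congr rfl (fun σ _ => measure_diff_null hH0)

end MVAux

open MVAux in
/-- For locally anti-blocking bodies `K, K' ⊆ ℝⁿ` and `0 ≤ j ≤ n`,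
`Vₙ(K[j], K'[n-j]) = ∑_{σ ∈ {-1,1}ⁿ} Vₙ(K_σ[j], K'_σ[n-j])` where `K_σ = K ∩ σℝ₊ⁿ`. -/
theorem mixed_volume_locally_antiblocking_orthant_decomposition
    (n : ℕ) (K K' : Set (EuclideanSpace ℝ (Fin n)))
    (hKconv : Convex ℝ K) (hKcomp : IsCompact K) (hKne : K.Nonempty)
    (hKlab : IsLocallyAntiBlocking K)
    (hK'conv : Convex ℝ K') (hK'comp : IsCompact K') (hK'ne : K'.Nonempty)
    (hK'lab : IsLocallyAntiBlocking K')
    (j : ℕ) (hj : j ≤ n)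
    (V : Set (EuclideanSpace ℝ (Fin n)) → Set (EuclideanSpace ℝ (Fin n)) → ℕ → ℝ)
    (hV : IsMixedVolFn n V) :
    V K K' j = ∑ σ : Fin n → Bool, V (K ∩ signedOrthant σ) (K' ∩ signedOrthant σ) j := by
  classical
  have h0K : (0 : EuclideanSpace ℝ (Fin n)) ∈ K := zero_mem_of_lab hKlab hKne
  have h0K' : (0 : EuclideanSpace ℝ (Fin n)) ∈ K' := zero_mem_of_lab hK'lab hK'ne
  set Kσ : (Fin n → Bool) → Set (EuclideanSpace ℝ (Fin n)) :=
    fun σ => K ∩ signedOrthant σ with hKσ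
  set K'σ : (Fin n → Bool) → Set (EuclideanSpace ℝ (Fin n)) :=
    fun σ => K' ∩ signedOrthant σ with hK'σ
  have hKσconv : ∀ σ, Convex ℝ (Kσ σ) := fun σ => hKconv.inter (convex_signedOrthant σ)
  have hK'σconv : ∀ σ, Convex ℝ (K'σ σ) := fun σ => hK'conv.inter (convex_signedOrthant σ)
  have hKσcomp : ∀ σ, IsCompact (Kσ σ) := fun σ =>
    hKcomp.inter_right (isClosed_signedOrthant σ)
  have hK'σcomp : ∀ σ, IsCompact (K'σ σ) := fun σ =>
    hK'comp.inter_right (isClosed_signedOrthant σ)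
  have hKσne : ∀ σ, (Kσ σ).Nonempty := fun σ => ⟨0, h0K, zero_mem_signedOrthant σ⟩
  have hK'σne : ∀ σ, (K'σ σ).Nonempty := fun σ => ⟨0, h0K', zero_mem_signedOrthant σ⟩
  have key : ∀ l : ℝ, 0 < l →
      ∑ i ∈ Finset.range (n + 1), (n.choose i : ℝ) * l ^ i * 1 ^ (n - i) * V K K' i
        = ∑ σ : Fin n → Bool, ∑ i ∈ Finset.range (n + 1),
            (n.choose i : ℝ) * l ^ i * 1 ^ (n - i) * V (Kσ σ) (K'σ σ) i := by
    intro l hl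
    rw [← hV K K' hKconv hKcomp hKne hK'conv hK'comp hK'ne l 1 hl.le zero_le_one]
    have hterm : ∀ σ : Fin n → Bool,
        ∑ i ∈ Finset.range (n + 1),
            (n.choose i : ℝ) * l ^ i * 1 ^ (n - i) * V (Kσ σ) (K'σ σ) i
          = (volume (l • Kσ σ + (1 : ℝ) • K'σ σ)).toReal := fun σ =>
      (hV (Kσ σ) (K'σ σ) (hKσconv σ) (hKσcomp σ) (hKσne σ) (hK'σconv σ) (hK'σcomp σ)
        (hK'σne σ) l 1 hl.le zero_le_one).symm
    rw [Finset.sum_congr rfl (fun σ _ => hterm σ)]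
    have hne_top : ∀ σ ∈ (Finset.univ : Finset (Fin n → Bool)),
        volume (l • Kσ σ + (1 : ℝ) • K'σ σ) ≠ ⊤ := by
      intro σ _
      exact (((hKσcomp σ).smul l).add ((hK'σcomp σ).smul (1 : ℝ))).measure_lt_top.ne
    rw [← ENNReal.toReal_sum hne_top]
    congr 1
    simp only [one_smul]
    have hmeas : MeasurableSet (l • K + K') :=
      ((hKcomp.smul l).add hK'comp).isClosed.measurableSet
    rw [volume_eq_sum_orthants hmeas]
    refine Finset.sum_congr rfl fun σ _ => ?_
    rw [add_inter_orthant (smul_lab hl hKlab) (hKconv.smul l) hK'lab hK'conv σ,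
      smul_inter_orthant hl σ]
  -- polynomial coefficient extraction
  set W : ℕ → ℝ := fun i => ∑ σ : Fin n → Bool, V (Kσ σ) (K'σ σ) i with hW
  set p : Polynomial ℝ :=
    ∑ i ∈ Finset.range (n + 1),
      Polynomial.monomial i ((n.choose i : ℝ) * (V K K' i - W i)) with hp
  have hroot : ∀ l : ℝ, 0 < l → p.eval l = 0 := by
    intro l hl
    have h := key l hl
    rw [Finset.sum_comm] at h
    have heval : p.eval l
        = ∑ i ∈ Finset.range (n + 1), (n.choose i : ℝ) * (V K K' i - W i) * l ^ i := by
      rw [hp, Polynomial.eval_finset_sum]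
      exact Finset.sum_congr rfl fun i _ => Polynomial.eval_monomial
    rw [heval]
    have hsplit : ∀ i ∈ Finset.range (n + 1),
        (n.choose i : ℝ) * (V K K' i - W i) * l ^ i
          = (n.choose i : ℝ) * l ^ i * 1 ^ (n - i) * V K K' i
            - ∑ σ : Fin n → Bool, (n.choose i : ℝ) * l ^ i * 1 ^ (n - i) * V (Kσ σ) (K'σ σ) i := by
      intro i _
      have hsum : ∑ σ : Fin n → Bool, (n.choose i : ℝ) * l ^ i * 1 ^ (n - i) * V (Kσ σ) (K'σ σ) i
          = (n.choose i : ℝ) * l ^ i * 1 ^ (n - i) * W i := by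
        rw [hW, Finset.mul_sum]
      rw [hsum, one_pow]
      ring
    rw [Finset.sum_congr rfl hsplit, Finset.sum_sub_distrib, h, sub_self]
  have hp0 : p = 0 := by
    apply Polynomial.eq_zero_of_infinite_isRoot
    apply Set.Infinite.mono _ (Set.Ioi_infinite (0 : ℝ))
    intro l hl
    exact hroot l hl
  have hcoeff : p.coeff j = (n.choose j : ℝ) * (V K K' j - W j) := by
    rw [hp, Polynomial.finset_sum_coeff]
    simp only [Polynomial.coeff_monomial]
    rw [Finset.sum_ite_eq' (Finset.range (n + 1)) j]
    rw [if_pos (Finset.mem_range.mpr (Nat.lt_succ_of_le hj))]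
  rw [hp0, Polynomial.coeff_zero] at hcoeff
  have hc : (n.choose j : ℝ) ≠ 0 := Nat.cast_ne_zero.mpr (Nat.choose_pos hj).ne'
  have hfin : V K K' j - W j = 0 := by
    rcases mul_eq_zero.mp hcoeff.symm with h | h
    · exact absurd h hc
    · exact h
  have : V K K' j = W j := by linarith
  rw [this, hW]
end
end

section
/- Let K, T ⊆ ℝ_+^n be anti-blocking convex bodies. Then Vol_n(K + T) ≤ Vol_n(K − T), where K − T = K + (−T) denotes the Minkowski difference body. -/
open MeasureTheory
open scoped Pointwise

noncomputable section

lemma fiber_le {P Q : Set ℝ} {X Y : ℝ} (hX : 0 ≤ X) (hY : 0 ≤ Y)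
    (hP : P ⊆ Set.Icc 0 (X + Y)) (hQ1 : Set.Ico 0 X ⊆ Q) (hQ2 : Set.Ioo (-Y) 0 ⊆ Q) :
    volume P ≤ volume Q := by
  have hdisj : Disjoint (Set.Ico 0 X) (Set.Ioo (-Y) (0:ℝ)) := by
    rw [Set.disjoint_left]
    rintro a ⟨ha0, _⟩ ⟨_, ha0'⟩
    linarith
  calc volume P ≤ volume (Set.Icc 0 (X + Y)) := measure_mono hP
    _ = ENNReal.ofReal (X + Y) := by rw [Real.volume_Icc, sub_zero]
    _ = ENNReal.ofReal X + ENNReal.ofReal Y := ENNReal.ofReal_add hX hY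
    _ = volume (Set.Ico 0 X) + volume (Set.Ioo (-Y) (0:ℝ)) := by
        rw [Real.volume_Ico, Real.volume_Ioo, sub_zero, zero_sub, neg_neg]
    _ = volume (Set.Ico 0 X ∪ Set.Ioo (-Y) 0) := (measure_union hdisj measurableSet_Ioo).symm
    _ ≤ volume Q := measure_mono (Set.union_subset hQ1 hQ2)

lemma vol_slice (m : ℕ) (i : Fin (m + 1)) (S : Set (Fin (m + 1) → ℝ)) (hS : MeasurableSet S) :
    volume S = ∫⁻ y : Fin m → ℝ, volume {t : ℝ | i.insertNth t y ∈ S} := by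
  set e := MeasurableEquiv.piFinSuccAbove (fun _ : Fin (m+1) => ℝ) i with he
  have hmp : MeasurePreserving e.symm volume volume :=
    (volume_preserving_piFinSuccAbove (fun _ : Fin (m+1) => ℝ) i).symm e
  have h1 : volume S = volume (e.symm ⁻¹' S) :=
    (hmp.measure_preimage hS.nullMeasurableSet).symm
  rw [h1, Measure.volume_eq_prod, Measure.prod_apply_symm (e.symm.measurable hS)]
  refine lintegral_congr fun y => ?_
  congr 1

/-- The single-coordinate reflection step: if `A` and `B` are compact, lie in `{xᵢ ≥ 0}` and are
down-closed in coordinate `i`, then reflecting `B` in coordinate `i` does not decrease the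
volume of the Minkowski sum. -/
lemma step_pi (m : ℕ) (i : Fin (m + 1)) (A B : Set (Fin (m + 1) → ℝ))
    (hAc : IsCompact A) (hBc : IsCompact B)
    (hA0 : ∀ x ∈ A, 0 ≤ x i) (hB0 : ∀ x ∈ B, 0 ≤ x i)
    (hAd : ∀ x ∈ A, ∀ t, 0 ≤ t → t ≤ x i → Function.update x i t ∈ A)
    (hBd : ∀ x ∈ B, ∀ t, 0 ≤ t → t ≤ x i → Function.update x i t ∈ B) :
    volume (A + B) ≤ volume (A + (fun y => Function.update y i (-(y i))) '' B) := by
  set R : (Fin (m+1) → ℝ) → (Fin (m+1) → ℝ) := fun y => Function.update y i (-(y i)) with hR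
  have hRcont : Continuous R := by
    have : R = fun y => fun j => if j = i then -(y i) else y j := by
      funext y j
      simp [hR, Function.update_apply]
    rw [this]
    refine continuous_pi fun j => ?_
    by_cases h : j = i
    · subst h
      simp only [↓reduceIte]
      exact (continuous_apply j).neg
    · simpa [h] using continuous_apply j
  have hABc : IsCompact (A + B) := hAc.add hBc
  have hARBc : IsCompact (A + R '' B) := hAc.add (hBc.image hRcont)
  rw [vol_slice m i _ hABc.isClosed.measurableSet,
      vol_slice m i _ hARBc.isClosed.measurableSet]
  refine lintegral_mono fun y => ?_
  set pt : ℝ → (Fin (m+1) → ℝ) := fun t => i.insertNth t y with hpt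
  -- off-coordinate values of `pt` do not depend on `t`
  have hoff : ∀ (t t' : ℝ) (j : Fin (m+1)), j ≠ i → pt t j = pt t' j := by
    intro t t' j hj
    obtain ⟨k, rfl⟩ := Fin.exists_succAbove_eq hj
    simp [hpt, Fin.insertNth_apply_succAbove]
  have hpti : ∀ t : ℝ, pt t i = t := fun t => by
    rw [hpt]
    exact Fin.insertNth_apply_same (α := fun _ : Fin (m+1) => ℝ) i t y
  by_cases hPne : {t : ℝ | pt t ∈ A + B}.Nonempty
  swap
  · rw [Set.not_nonempty_iff_eq_empty] at hPne
    rw [hPne]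
    simp
  obtain ⟨t₀, ht₀⟩ := hPne
  rw [Set.mem_setOf_eq, Set.mem_add] at ht₀
  obtain ⟨a₀, ha₀, b₀, hb₀, hab₀⟩ := ht₀
  -- the two auxiliary section sets
  set SA : Set ℝ := {s | ∃ a ∈ A, ∃ b ∈ B, b i = 0 ∧ a + b = pt s} with hSA
  set SB : Set ℝ := {s | ∃ a ∈ A, ∃ b ∈ B, a i = 0 ∧ a + b = pt s} with hSB
  -- from a decomposition of `pt t` we get elements of `SA` and `SB`
  have key : ∀ t : ℝ, pt t ∈ A + B → ∃ a ∈ A, ∃ b ∈ B,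
      a + b = pt t ∧ a i ∈ SA ∧ b i ∈ SB ∧ t = a i + b i := by
    intro t ht
    rw [Set.mem_add] at ht
    obtain ⟨a, ha, b, hb, hab⟩ := ht
    have hbi : 0 ≤ b i := hB0 b hb
    have hai : 0 ≤ a i := hA0 a ha
    have hti : a i + b i = t := by
      have := congrFun hab i
      simpa [hpti] using this
    refine ⟨a, ha, b, hb, hab, ⟨a, ha, Function.update b i 0, hBd b hb 0 le_rfl hbi,
      Function.update_self i 0 b, ?_⟩, ⟨Function.update a i 0, hAd a ha 0 le_rfl hai, b, hb,
      Function.update_self i 0 a, ?_⟩, hti.symm⟩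
    · funext j
      by_cases hj : j = i
      · subst hj
        simp [hpti, Function.update_self]
      · simp only [Pi.add_apply, Function.update_of_ne hj]
        rw [hoff (a i) t j hj, ← hab]
        rfl
    · funext j
      by_cases hj : j = i
      · subst hj
        simp [hpti, Function.update_self]
      · simp only [Pi.add_apply, Function.update_of_ne hj]
        rw [hoff (b i) t j hj, ← hab]
        rfl
  obtain ⟨a₁, ha₁, b₁, hb₁, -, haSA, hbSB, -⟩ := key t₀ (by rw [Set.mem_add]; exact ⟨a₀, ha₀, b₀, hb₀, hab₀⟩)
  have hSAne : SA.Nonempty := ⟨a₁ i, haSA⟩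
  have hSBne : SB.Nonempty := ⟨b₁ i, hbSB⟩
  -- boundedness of the section sets
  have hSAsub : SA ⊆ (fun x : Fin (m+1) → ℝ => x i) '' (A + B) := by
    rintro s ⟨a, ha, b, hb, -, hab⟩
    exact ⟨a + b, by rw [Set.mem_add]; exact ⟨a, ha, b, hb, rfl⟩, by rw [hab]; exact hpti s⟩
  have hSBsub : SB ⊆ (fun x : Fin (m+1) → ℝ => x i) '' (A + B) := by
    rintro s ⟨a, ha, b, hb, -, hab⟩
    exact ⟨a + b, by rw [Set.mem_add]; exact ⟨a, ha, b, hb, rfl⟩, by rw [hab]; exact hpti s⟩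
  have himc : IsCompact ((fun x : Fin (m+1) → ℝ => x i) '' (A + B)) :=
    hABc.image (continuous_apply i)
  have hSAbdd : BddAbove SA := himc.bddAbove.mono hSAsub
  have hSBbdd : BddAbove SB := himc.bddAbove.mono hSBsub
  set X := sSup SA with hX
  set Y := sSup SB with hY
  have hSAnn : ∀ s ∈ SA, 0 ≤ s := by
    rintro s ⟨a, ha, b, hb, hbi, hab⟩
    have := congrFun hab i
    simp only [Pi.add_apply, hbi, add_zero, hpti] at this
    rw [← this]
    exact hA0 a ha
  have hSBnn : ∀ s ∈ SB, 0 ≤ s := by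
    rintro s ⟨a, ha, b, hb, hai, hab⟩
    have := congrFun hab i
    simp only [Pi.add_apply, hai, zero_add, hpti] at this
    rw [← this]
    exact hB0 b hb
  have hX0 : 0 ≤ X := le_csSup_of_le hSAbdd haSA (hSAnn _ haSA) |>.trans' (le_refl 0) |>.trans (le_refl X)
  have hY0 : 0 ≤ Y := le_csSup_of_le hSBbdd hbSB (hSBnn _ hbSB)
  refine fiber_le hX0 hY0 ?_ ?_ ?_
  · -- P ⊆ [0, X + Y]
    intro t ht
    rw [Set.mem_setOf_eq] at ht
    obtain ⟨a, ha, b, hb, -, haSA', hbSB', hteq⟩ := key t ht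
    constructor
    · rw [hteq]
      exact add_nonneg (hA0 a ha) (hB0 b hb)
    · rw [hteq]
      exact add_le_add (le_csSup hSAbdd haSA') (le_csSup hSBbdd hbSB')
  · -- [0, X) ⊆ Q
    rintro t ⟨ht0, htX⟩
    obtain ⟨s, hsSA, hts⟩ := exists_lt_of_lt_csSup hSAne htX
    obtain ⟨a, ha, b, hb, hbi, hab⟩ := hsSA
    have hais : a i = s := by
      have := congrFun hab i
      simpa [Pi.add_apply, hbi, hpti] using this
    have ha' : Function.update a i t ∈ A := hAd a ha t ht0 (by rw [hais]; exact hts.le)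
    have hbR : b ∈ R '' B := by
      refine ⟨b, hb, ?_⟩
      rw [hR]
      simp only [hbi, neg_zero]
      rw [← hbi]
      exact Function.update_eq_self i b
    rw [Set.mem_setOf_eq, Set.mem_add]
    refine ⟨Function.update a i t, ha', b, hbR, ?_⟩
    funext j
    by_cases hj : j = i
    · subst hj
      simp [hpti, Function.update_self, hbi]
    · simp only [Pi.add_apply, Function.update_of_ne hj]
      show a j + b j = pt t j
      rw [← hoff s t j hj]
      have := congrFun hab j
      simpa using this
  · -- (-Y, 0) ⊆ Q
    rintro t ⟨htY, ht0⟩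
    have h1 : -t < Y := by linarith
    obtain ⟨s, hsSB, hts⟩ := exists_lt_of_lt_csSup hSBne h1
    obtain ⟨a, ha, b, hb, hai, hab⟩ := hsSB
    have hbis : b i = s := by
      have := congrFun hab i
      simpa [Pi.add_apply, hai, hpti] using this
    have hb' : Function.update b i (-t) ∈ B :=
      hBd b hb (-t) (by linarith) (by rw [hbis]; exact hts.le)
    rw [Set.mem_setOf_eq, Set.mem_add]
    refine ⟨a, ha, R (Function.update b i (-t)), ⟨Function.update b i (-t), hb', rfl⟩, ?_⟩
    have hRb : R (Function.update b i (-t)) = Function.update b i t := by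
      rw [hR]
      simp only [Function.update_self, neg_neg, Function.update_idem]
    rw [hRb]
    funext j
    by_cases hj : j = i
    · subst hj
      simp [hpti, Function.update_self, hai]
    · simp only [Pi.add_apply, Function.update_of_ne hj]
      show a j + b j = pt t j
      rw [← hoff s t j hj]
      have := congrFun hab j
      simpa using this

/-- Iterating the one-coordinate reflections: flipping all coordinates of `T`. -/
lemma chain_pi (m : ℕ) (A T : Set (Fin (m + 1) → ℝ)) (hAc : IsCompact A) (hTc : IsCompact T)
    (hA0 : ∀ x ∈ A, ∀ i, 0 ≤ x i) (hT0 : ∀ x ∈ T, ∀ i, 0 ≤ x i)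
    (hAd : ∀ x ∈ A, ∀ (i : Fin (m + 1)) (t : ℝ), 0 ≤ t → t ≤ x i → Function.update x i t ∈ A)
    (hTd : ∀ x ∈ T, ∀ (i : Fin (m + 1)) (t : ℝ), 0 ≤ t → t ≤ x i → Function.update x i t ∈ T) :
    volume (A + T) ≤ volume (A + (fun x => -x) '' T) := by
  set F : ℕ → (Fin (m + 1) → ℝ) → (Fin (m + 1) → ℝ) :=
    fun k x j => if (j : ℕ) < k then -(x j) else x j with hF
  have hFcont : ∀ k, Continuous (F k) := by
    intro k
    refine continuous_pi fun j => ?_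
    by_cases h : (j : ℕ) < k
    · simp only [hF, h, ↓reduceIte]
      exact (continuous_apply j).neg
    · simpa [hF, h] using continuous_apply j
  have main : ∀ k, k ≤ m + 1 → volume (A + T) ≤ volume (A + F k '' T) := by
    intro k
    induction k with
    | zero =>
      intro _
      have h0 : F 0 '' T = T := by
        have hid : F 0 = id := by
          funext x j
          simp [hF]
        rw [hid, Set.image_id]
      rw [h0]
    | succ k ih =>
      intro hk
      have hk2 : k < m + 1 := hk
      set i : Fin (m + 1) := ⟨k, hk2⟩ with hi
      have hFi : ∀ x : Fin (m + 1) → ℝ, F k x i = x i := by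
        intro x
        simp [hF, hi]
      refine (ih (Nat.le_of_succ_le hk)).trans ?_
      have hupd : ∀ (y : Fin (m + 1) → ℝ) (t : ℝ),
          Function.update (F k y) i t = F k (Function.update y i t) := by
        intro y t
        funext j
        by_cases hj : j = i
        · subst hj
          rw [Function.update_self, hFi, Function.update_self]
        · rw [Function.update_of_ne hj]
          simp only [hF]
          rw [Function.update_of_ne hj]
      have himage : (fun y => Function.update y i (-(y i))) '' (F k '' T) = F (k + 1) '' T := by
        rw [Set.image_image]
        have hfun : (fun x => Function.update (F k x) i (-(F k x i))) = F (k + 1) := by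
          funext x j
          by_cases hj : j = i
          · subst hj
            rw [Function.update_self, hFi]
            simp [hF, hi]
          · rw [Function.update_of_ne hj]
            have hjk : (j : ℕ) ≠ k := fun h => hj (Fin.ext (by simp [hi, h]))
            by_cases h2 : (j : ℕ) < k
            · have h3 : (j : ℕ) < k + 1 := Nat.lt_succ_of_lt h2
              simp [hF, h2, h3]
            · have h3 : ¬ (j : ℕ) < k + 1 := by omega
              simp [hF, h2, h3]
        rw [hfun]
      rw [← himage]
      refine step_pi m i A (F k '' T) hAc (hTc.image (hFcont k))
        (fun x hx => hA0 x hx i) ?_ (fun x hx t ht0 hti => hAd x hx i t ht0 hti) ?_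
      · rintro x ⟨y, hy, rfl⟩
        rw [hFi]
        exact hT0 y hy i
      · rintro x ⟨y, hy, rfl⟩ t ht0 hti
        rw [hFi] at hti
        rw [hupd]
        exact ⟨Function.update y i t, hTd y hy i t ht0 hti, rfl⟩
  have hfin : F (m + 1) '' T = (fun x => -x) '' T := by
    have hfun : F (m + 1) = (fun x : Fin (m + 1) → ℝ => -x) := by
      funext x j
      simp [hF, j.isLt]
    rw [hfun]
  rw [← hfin]
  exact main (m + 1) le_rfl

/-- A convex anti-blocking body is down-closed in every coordinate. -/
lemma antiblocking_downclosed {n : ℕ} {K : Set (EuclideanSpace ℝ (Fin n))}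
    (hconv : Convex ℝ K) (hab : IsAntiBlocking K) :
    ∀ x ∈ K, ∀ (i : Fin n) (t : ℝ), 0 ≤ t → t ≤ x i → WithLp.toLp 2 (Function.update x.ofLp i t) ∈ K := by
  intro x hx i t ht0 hti
  have hx0 : WithLp.toLp 2 (Function.update x.ofLp i 0) ∈ K := by
    have h1 : coordProj (Finset.univ.erase i) x ∈ coordProj (Finset.univ.erase i) '' K :=
      Set.mem_image_of_mem _ hx
    rw [hab.2] at h1
    have h2 : coordProj (Finset.univ.erase i) x = WithLp.toLp 2 (Function.update x.ofLp i 0) := by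
      ext j
      by_cases hj : j = i
      · subst hj
        simp [coordProj, Function.update_self]
      · simp [coordProj, Function.update_of_ne hj, hj]
    rw [h2] at h1
    exact h1.1
  rcases eq_or_lt_of_le (hab.1 hx i) with hxi | hxi
  · have ht : t = 0 := le_antisymm (hxi ▸ hti) ht0
    rw [ht]
    exact hx0
  · set lam : ℝ := t / x i with hlam
    set x0 : EuclideanSpace ℝ (Fin n) := WithLp.toLp 2 (Function.update x.ofLp i 0) with hx0def
    have h0 : 0 ≤ lam := div_nonneg ht0 hxi.le
    have h1 : lam ≤ 1 := (div_le_one hxi).2 hti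
    have heq : (WithLp.toLp 2 (Function.update x.ofLp i t) : EuclideanSpace ℝ (Fin n)) = lam • x + (1 - lam) • x0 := by
      ext j
      by_cases hj : j = i
      · subst hj
        show (WithLp.toLp 2 (Function.update x.ofLp j t)) j = (lam • x + (1 - lam) • x0) j
        rw [PiLp.toLp_apply, Function.update_self, PiLp.add_apply, PiLp.smul_apply, PiLp.smul_apply, hx0def]; rw [show (WithLp.toLp 2 (Function.update x.ofLp j 0)).ofLp j = Function.update x.ofLp j 0 j from rfl, Function.update_self,
          smul_eq_mul, smul_eq_mul, mul_zero, add_zero, hlam, div_mul_cancel₀ t hxi.ne']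
      · show (WithLp.toLp 2 (Function.update x.ofLp i t)) j = _
        rw [PiLp.toLp_apply, Function.update_of_ne hj, PiLp.add_apply, PiLp.smul_apply, PiLp.smul_apply,
          hx0def]; rw [show (WithLp.toLp 2 (Function.update x.ofLp i 0)).ofLp j = Function.update x.ofLp i 0 j from rfl, Function.update_of_ne hj, smul_eq_mul, smul_eq_mul]
        ring
    rw [heq]
    exact hconv hx hx0 h0 (by linarith) (by ring)

/-- For anti-blocking bodies `K, T ⊆ ℝ₊ⁿ`, `Vol(K + T) ≤ Vol(K - T)`. -/
theorem volume_add_le_volume_sub_antiblocking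
    (n : ℕ) (K T : Set (EuclideanSpace ℝ (Fin n)))
    (hKconv : Convex ℝ K) (hKcomp : IsCompact K) (hKne : K.Nonempty)
    (hKab : IsAntiBlocking K)
    (hTconv : Convex ℝ T) (hTcomp : IsCompact T) (hTne : T.Nonempty)
    (hTab : IsAntiBlocking T) :
    volume (K + T) ≤ volume (K + -T) := by
  rcases n with _ | m
  · -- dimension 0: `-T = T`
    have hTT : -T = T := by
      ext x
      rw [Set.mem_neg]
      have hx : -x = x := (WithLp.ext_iff 2).2 (funext fun j => Fin.elim0 j)
      rw [hx]
    rw [hTT]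
  · -- dimension m + 1
    have hKd := antiblocking_downclosed hKconv hKab
    have hTd := antiblocking_downclosed hTconv hTab
    set e0 := (MeasurableEquiv.toLp 2 (Fin (m + 1) → ℝ)).symm with he0
    have hmp := EuclideanSpace.volume_preserving_symm_measurableEquiv_toLp (Fin (m + 1))
    have he0cont : Continuous e0 := by
      rw [he0]
      exact PiLp.continuous_ofLp _ _
    have hvol : ∀ S : Set (EuclideanSpace ℝ (Fin (m + 1))), MeasurableSet S →
        volume (e0 '' S) = volume S := by
      intro S hS
      rw [MeasurableEquiv.image_eq_preimage_symm]
      exact (hmp.symm e0).measure_preimage hS.nullMeasurableSet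
    have himadd : ∀ S1 S2 : Set (EuclideanSpace ℝ (Fin (m + 1))),
        e0 '' (S1 + S2) = e0 '' S1 + e0 '' S2 := by
      intro S1 S2
      ext z
      simp only [Set.mem_image, Set.mem_add]
      constructor
      · rintro ⟨w, ⟨a, ha, b, hb, rfl⟩, rfl⟩
        exact ⟨e0 a, ⟨a, ha, rfl⟩, e0 b, ⟨b, hb, rfl⟩, rfl⟩
      · rintro ⟨u, ⟨a, ha, rfl⟩, v, ⟨b, hb, rfl⟩, rfl⟩
        exact ⟨a + b, ⟨a, ha, b, hb, rfl⟩, rfl⟩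
    have himneg : e0 '' (-T) = (fun x : Fin (m + 1) → ℝ => -x) '' (e0 '' T) := by
      have hneg : -T = (fun x : EuclideanSpace ℝ (Fin (m + 1)) => -x) '' T := by
        ext x
        rw [Set.mem_neg]
        constructor
        · intro hx
          exact ⟨-x, hx, neg_neg x⟩
        · rintro ⟨w, hw, rfl⟩
          rwa [neg_neg]
      rw [hneg, Set.image_image, Set.image_image]
      have : (fun x : EuclideanSpace ℝ (Fin (m + 1)) => e0 (-x)) =
          (fun x : EuclideanSpace ℝ (Fin (m + 1)) => -(e0 x)) := rfl
      rw [this]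
    have h1 : volume (K + T) = volume (e0 '' K + e0 '' T) := by
      rw [← himadd]
      exact (hvol _ (hKcomp.add hTcomp).isClosed.measurableSet).symm
    have h2 : volume (K + -T) =
        volume (e0 '' K + (fun x : Fin (m + 1) → ℝ => -x) '' (e0 '' T)) := by
      rw [← himneg, ← himadd]
      exact (hvol _ (hKcomp.add hTcomp.neg).isClosed.measurableSet).symm
    rw [h1, h2]
    refine chain_pi m (e0 '' K) (e0 '' T) (hKcomp.image he0cont) (hTcomp.image he0cont)
      ?_ ?_ ?_ ?_
    · rintro x ⟨k, hk, rfl⟩ i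
      exact hKab.1 hk i
    · rintro x ⟨k, hk, rfl⟩ i
      exact hTab.1 hk i
    · rintro x ⟨k, hk, rfl⟩ i t ht0 hti
      exact ⟨_, hKd k hk i t ht0 hti, rfl⟩
    · rintro x ⟨k, hk, rfl⟩ i t ht0 hti
      exact ⟨_, hTd k hk i t ht0 hti, rfl⟩
end
end

section
/- Let 0 ≤ k ≤ n, let E = span{e_{n−k+1}, …, e_n} ⊆ ℝ^n, and let K ⊆ E be a convex body. Then Vol_n(Δ_n + K) = ∫_{(t_1,…,t_{n−k}) ∈ Δ_{n−k}} Vol_k( (1 − Σ_{i=1}^{n−k} t_i) Δ_E + K ) dt, where Δ_{n−k} is the coordinate simplex conv{0, e_1, …, e_{n−k}} in span{e_1,…,e_{n−k}}, Δ_E = conv{0, e_{n−k+1}, …, e_n} is the coordinate simplex in E, and Vol_k is k-dimensional Lebesgue measure on E. -/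
open MeasureTheory
open scoped Pointwise

noncomputable section

/-! ### Auxiliary lemmas -/

lemma euc_sum_apply {ι κ : Type*} (s : Finset κ) (f : κ → EuclideanSpace ℝ ι) (j : ι) :
    (∑ i ∈ s, f i) j = ∑ i ∈ s, f i j := by
  classical
  induction s using Finset.induction_on with
  | empty => rfl
  | insert a s h ih => rw [Finset.sum_insert h, Finset.sum_insert h, PiLp.add_apply, ih]

lemma simplex_char {ι : Type*} [Fintype ι] [DecidableEq ι] (I : Finset ι) :
    convexHull ℝ (insert 0 ((fun i : ι => EuclideanSpace.single i (1:ℝ)) '' ↑I)) =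
      {x : EuclideanSpace ℝ ι | (∀ i, 0 ≤ x i) ∧ (∀ i ∉ I, x i = 0) ∧ ∑ i, x i ≤ 1} := by
  apply le_antisymm
  · apply convexHull_min
    · rintro x (rfl | ⟨i, hi, rfl⟩)
      · exact ⟨fun i => le_refl 0, fun i _ => rfl, by simp⟩
      · refine ⟨fun j => ?_, fun j hj => ?_, ?_⟩
        · show 0 ≤ EuclideanSpace.single i (1:ℝ) j
          rw [EuclideanSpace.single_apply]; positivity
        · show EuclideanSpace.single i (1:ℝ) j = 0
          rw [EuclideanSpace.single_apply, if_neg]; rintro rfl; exact hj hi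
        · simp [EuclideanSpace.single_apply]
    · rintro x ⟨hx1, hx2, hx3⟩ y ⟨hy1, hy2, hy3⟩ a b ha hb hab
      refine ⟨fun i => ?_, fun i hi => ?_, ?_⟩
      · simp only [PiLp.add_apply, PiLp.smul_apply, smul_eq_mul]
        exact add_nonneg (mul_nonneg ha (hx1 i)) (mul_nonneg hb (hy1 i))
      · simp only [PiLp.add_apply, PiLp.smul_apply, smul_eq_mul, hx2 i hi, hy2 i hi,
          mul_zero, add_zero]
      · simp only [PiLp.add_apply, PiLp.smul_apply, smul_eq_mul]
        rw [Finset.sum_add_distrib, ← Finset.mul_sum, ← Finset.mul_sum]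
        calc a * ∑ i, x i + b * ∑ i, y i ≤ a * 1 + b * 1 := by gcongr
          _ = 1 := by rw [mul_one, mul_one, hab]
  · rintro x ⟨hx1, hx2, hx3⟩
    have hIx : ∑ i ∈ I, x i = ∑ i, x i :=
      Finset.sum_subset (Finset.subset_univ I) (fun i _ hi => hx2 i hi)
    set w : Option ↥I → ℝ := fun o => o.elim (1 - ∑ i, x i) (fun i => x ↑i) with hw
    set z : Option ↥I → EuclideanSpace ℝ ι :=
      fun o => o.elim 0 (fun i => EuclideanSpace.single ↑i 1) with hz
    have hwsum : ∑ o, w o = 1 := by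
      rw [Fintype.sum_option]
      simp only [hw, Option.elim]
      rw [Finset.sum_coe_sort I (fun i => x i), hIx]
      ring
    have hmem := Finset.centerMass_mem_convexHull
      (s := insert 0 ((fun i : ι => EuclideanSpace.single i (1:ℝ)) '' ↑I))
      (Finset.univ : Finset (Option ↥I))
      (w := w) (fun o _ => ?_) (by rw [hwsum]; norm_num)
      (z := z) (fun o _ => ?_)
    · convert hmem using 1
      rw [Finset.centerMass, hwsum, inv_one, one_smul]
      rw [Fintype.sum_option]
      simp only [hw, hz, Option.elim, smul_zero, zero_add]
      ext j
      rw [euc_sum_apply]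
      simp only [PiLp.smul_apply, smul_eq_mul]
      have : ∀ i : ↥I, x ↑i * EuclideanSpace.single (↑i) (1:ℝ) j
          = (if j = ↑i then x ↑i else 0) := by
        intro i; rw [EuclideanSpace.single_apply]; split <;> ring
      rw [Finset.sum_congr rfl (fun i _ => this i)]
      rw [Finset.sum_coe_sort I (fun i => if j = i then x i else 0)]
      by_cases hj : j ∈ I
      · rw [Finset.sum_ite_eq I j (fun i => x i), if_pos hj]
      · rw [Finset.sum_eq_zero, hx2 j hj]
        intro i hi
        rw [if_neg]; rintro rfl; exact hj hi
    · cases o with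
      | none => simpa [hw] using hx3
      | some i => exact hx1 ↑i
    · cases o with
      | none => exact Set.mem_insert _ _
      | some i => exact Set.mem_insert_of_mem _ ⟨↑i, i.2, rfl⟩

lemma coordSimplex_char (ι : Type*) [Fintype ι] [DecidableEq ι] :
    convexHull ℝ (insert 0 (Set.range fun i : ι => EuclideanSpace.single i (1 : ℝ))) =
      {x : EuclideanSpace ℝ ι | (∀ i, 0 ≤ x i) ∧ ∑ i, x i ≤ 1} := by
  rw [← Set.image_univ, ← Finset.coe_univ, simplex_char]
  ext x; simp

lemma smul_simplex_char {ι : Type*} [Fintype ι] [DecidableEq ι] (I : Finset ι)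
    {c : ℝ} (hc : 0 ≤ c) :
    c • convexHull ℝ (insert 0 ((fun i : ι => EuclideanSpace.single i (1:ℝ)) '' ↑I)) =
      {x : EuclideanSpace ℝ ι | (∀ i, 0 ≤ x i) ∧ (∀ i ∉ I, x i = 0) ∧ ∑ i, x i ≤ c} := by
  rcases eq_or_lt_of_le hc with rfl | hc
  · rw [Set.zero_smul_set]
    · ext x
      simp only [Set.mem_singleton_iff, Set.mem_setOf_eq]
      constructor
      · rintro rfl; exact ⟨fun i => le_refl 0, fun i _ => rfl, by simp⟩
      · rintro ⟨h1, _, h3⟩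
        rw [Set.mem_zero]; ext j
        have : x j ≤ 0 := le_trans (Finset.single_le_sum (fun i _ => h1 i) (Finset.mem_univ j)) h3
        exact le_antisymm this (h1 j)
    · exact ⟨0, subset_convexHull ℝ _ (Set.mem_insert _ _)⟩
  · ext x
    rw [Set.mem_smul_set_iff_inv_smul_mem₀ (ne_of_gt hc), simplex_char]
    simp only [Set.mem_setOf_eq, PiLp.smul_apply, smul_eq_mul]
    constructor
    · rintro ⟨h1, h2, h3⟩
      refine ⟨fun i => ?_, fun i hi => ?_, ?_⟩
      · have := h1 i; nlinarith [mul_pos (inv_pos.2 hc) (lt_of_le_of_lt (le_refl (0:ℝ)) hc)]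
      · have := h2 i hi
        field_simp at this
        simpa using this
      · rw [← Finset.mul_sum] at h3
        rw [← mul_le_mul_iff_right₀ (inv_pos.2 hc)]
        calc c⁻¹ * ∑ i, x i ≤ 1 := h3
          _ = c⁻¹ * c := by field_simp
    · rintro ⟨h1, h2, h3⟩
      refine ⟨fun i => mul_nonneg (le_of_lt (inv_pos.2 hc)) (h1 i),
        fun i hi => by rw [h2 i hi, mul_zero], ?_⟩
      rw [← Finset.mul_sum]
      rw [inv_mul_le_iff₀ hc, mul_one]
      exact h3

section Main

variable {n : ℕ}

/-- The coordinate subsimplex spanned by `{eᵢ : i ∈ I}` together with `0`. -/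
def DI (I : Finset (Fin n)) : Set (EuclideanSpace ℝ (Fin n)) :=
  convexHull ℝ (insert 0 ((fun i : Fin n => EuclideanSpace.single i (1 : ℝ)) '' ↑I))

lemma main_set_eq (I : Finset (Fin n)) (K : Set (EuclideanSpace ℝ (Fin n)))
    (hKE : K ⊆ coordSubspace I) :
    convexHull ℝ (insert 0 (Set.range fun i : Fin n => EuclideanSpace.single i (1 : ℝ))) + K =
      {x : EuclideanSpace ℝ (Fin n) | (∀ i ∉ I, 0 ≤ x i) ∧ (∑ i ∈ Iᶜ, x i) ≤ 1 ∧
        coordProj I x ∈ (1 - ∑ i ∈ Iᶜ, x i) • DI I + K} := by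
  ext x
  rw [Set.mem_add, Set.mem_setOf_eq]
  constructor
  · rintro ⟨a, ha, y, hy, rfl⟩
    rw [coordSimplex_char] at ha
    obtain ⟨ha1, ha2⟩ := ha
    have hyz : ∀ i ∉ I, y i = 0 := fun i hi => hKE hy i hi
    have hsum : ∑ i ∈ Iᶜ, (a + y) i = ∑ i ∈ Iᶜ, a i := by
      apply Finset.sum_congr rfl
      intro i hi
      rw [PiLp.add_apply, hyz i (Finset.mem_compl.mp hi), add_zero]
    have hcompl_le : ∑ i ∈ Iᶜ, a i ≤ 1 :=
      le_trans (Finset.sum_le_sum_of_subset_of_nonneg (Finset.subset_univ Iᶜ)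
        (fun i _ _ => ha1 i)) ha2
    refine ⟨fun i hi => ?_, by rw [hsum]; exact hcompl_le, ?_⟩
    · rw [PiLp.add_apply, hyz i hi, add_zero]; exact ha1 i
    · have hproj : coordProj I (a + y) = coordProj I a + y := by
        ext j
        simp only [coordProj, PiLp.add_apply, PiLp.toLp_apply]
        by_cases hj : j ∈ I
        · simp [hj]
        · simp [hj, hyz j hj]
      rw [hproj, hsum]
      refine Set.add_mem_add ?_ hy
      simp only [DI]
      rw [smul_simplex_char I (by linarith), Set.mem_setOf_eq]
      refine ⟨fun i => ?_, fun i hi => by simp [coordProj, hi], ?_⟩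
      · simp only [coordProj, PiLp.toLp_apply]
        split
        · exact ha1 i
        · exact le_refl 0
      · have hkey : ∑ i, coordProj I a i = ∑ i ∈ I, a i := by
          rw [← Finset.sum_add_sum_compl I (fun i => coordProj I a i)]
          have h1 : ∑ i ∈ I, coordProj I a i = ∑ i ∈ I, a i :=
            Finset.sum_congr rfl (fun i hi => by simp [coordProj, hi])
          have h2 : ∑ i ∈ Iᶜ, coordProj I a i = 0 :=
            Finset.sum_eq_zero (fun i hi => by
              simp [coordProj, Finset.mem_compl.mp hi])
          rw [h1, h2, add_zero]
        rw [hkey]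
        have := Finset.sum_add_sum_compl I (fun i => a i)
        linarith
  · rintro ⟨h1, h2, hmem⟩
    rw [Set.mem_add] at hmem
    obtain ⟨w, hw, y, hy, hwy⟩ := hmem
    simp only [DI] at hw
    rw [smul_simplex_char I (by linarith)] at hw
    obtain ⟨hw1, hw2, hw3⟩ := hw
    have hyz : ∀ i ∉ I, y i = 0 := fun i hi => hKE hy i hi
    have hxy : ∀ i ∈ I, x i - y i = w i := by
      intro i hi
      have hc := congrFun (congrArg WithLp.ofLp hwy) i
      have : w i + y i = x i := by
        simpa [coordProj, if_pos hi] using hc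
      linarith
    refine ⟨x - y, ?_, y, hy, by abel⟩
    rw [coordSimplex_char]
    constructor
    · intro i
      rw [PiLp.sub_apply]
      by_cases hi : i ∈ I
      · rw [hxy i hi]; exact hw1 i
      · rw [hyz i hi, sub_zero]; exact h1 i hi
    · have e1 : ∑ i ∈ I, (x i - y i) = ∑ i, w i := by
        rw [Finset.sum_congr rfl (fun i hi => hxy i hi)]
        exact Finset.sum_subset (Finset.subset_univ I) (fun i _ hi => hw2 i hi)
      have e2 : ∑ i ∈ Iᶜ, (x i - y i) = ∑ i ∈ Iᶜ, x i := by
        apply Finset.sum_congr rfl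
        intro i hi
        rw [hyz i (Finset.mem_compl.mp hi), sub_zero]
      have e4 : ∑ i, (x - y) i = ∑ i ∈ I, (x i - y i) + ∑ i ∈ Iᶜ, (x i - y i) := by
        rw [← Finset.sum_add_sum_compl I (fun i => (x - y) i)]
        congr 1
      rw [e4, e1, e2]
      linarith

/-- The coordinate-splitting map. -/
def psiMap (I : Finset (Fin n)) (x : EuclideanSpace ℝ (Fin n)) :
    ((↥(Iᶜ) : Type) → ℝ) × ((↥I : Type) → ℝ) :=
  (fun i => x ↑i, fun i => x ↑i)

lemma psi_measurePreserving (I : Finset (Fin n)) :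
    MeasurePreserving (psiMap I) volume volume := by
  classical
  set e : {i : Fin n // ¬ (i ∈ Iᶜ)} ≃ ↥I :=
    Equiv.subtypeEquivRight (fun i => by simp) with he
  have hprod : MeasurePreserving
      (Prod.map (id : ({ i : Fin n // i ∈ Iᶜ } → ℝ) → _)
        ⇑(MeasurableEquiv.piCongrLeft (fun _ : ↥I => ℝ) e)) volume volume := by
    rw [Measure.volume_eq_prod, Measure.volume_eq_prod]
    exact (MeasurePreserving.id _).prod
      (volume_measurePreserving_piCongrLeft (fun _ : ↥I => ℝ) e)
  have hsplit : MeasurePreserving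
      (⇑(MeasurableEquiv.piEquivPiSubtypeProd (fun _ : Fin n => ℝ) (fun i => i ∈ Iᶜ)))
      volume (volume : Measure (({ i : Fin n // i ∈ Iᶜ } → ℝ) × ({ i : Fin n // i ∉ Iᶜ } → ℝ))) := by
    have h := volume_preserving_piEquivPiSubtypeProd (fun _ : Fin n => ℝ) (fun i => i ∈ Iᶜ)
    convert h
    all_goals rfl
  have heuc : MeasurePreserving (⇑(MeasurableEquiv.toLp 2 (Fin n → ℝ)).symm)
      volume volume := EuclideanSpace.volume_preserving_symm_measurableEquiv_toLp (Fin n)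
  have hcomp := (hprod.comp hsplit).comp heuc
  have hfun : ((Prod.map (id : ({ i : Fin n // i ∈ Iᶜ } → ℝ) → _)
        ⇑(MeasurableEquiv.piCongrLeft (fun _ : ↥I => ℝ) e)) ∘
      (⇑(MeasurableEquiv.piEquivPiSubtypeProd (fun _ : Fin n => ℝ) (fun i => i ∈ Iᶜ)))) ∘
      (⇑(MeasurableEquiv.toLp 2 (Fin n → ℝ)).symm) = psiMap I := by
    funext x
    refine Prod.ext rfl ?_
    funext i
    show (MeasurableEquiv.piCongrLeft (fun _ : ↥I => ℝ) e)
      (fun j : {i : Fin n // ¬ (i ∈ Iᶜ)} => x ↑j) i = x ↑i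
    rw [MeasurableEquiv.coe_piCongrLeft]
    have : i = e (e.symm i) := (e.apply_symm_apply i).symm
    rw [this, Equiv.piCongrLeft_apply_apply]
    rfl
  rw [hfun] at hcomp
  refine ⟨hcomp.measurable, ?_⟩
  rw [hcomp.map_eq]

/-- Embedding of `↥I → ℝ` back into `EuclideanSpace ℝ (Fin n)`. -/
def embedI (I : Finset (Fin n)) (v : (↥I : Type) → ℝ) : EuclideanSpace ℝ (Fin n) :=
  (WithLp.toLp 2 (fun j => if h : j ∈ I then v ⟨j, h⟩ else 0) : EuclideanSpace ℝ (Fin n))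

/-- The section set. -/
def Cset (I : Finset (Fin n)) (K : Set (EuclideanSpace ℝ (Fin n))) (c : ℝ) :
    Set ((↥I : Type) → ℝ) :=
  {v | embedI I v ∈ c • DI I + K}

/-- The base simplex in the complementary coordinates, in the pi space. -/
def Sset (I : Finset (Fin n)) : Set ((↥(Iᶜ) : Type) → ℝ) :=
  {u | (∀ i, 0 ≤ u i) ∧ ∑ i, u i ≤ 1}


lemma DI_zero (I : Finset (Fin n)) {d : EuclideanSpace ℝ (Fin n)} (hd : d ∈ DI I) :
    ∀ i ∉ I, d i = 0 := by
  rw [DI, simplex_char] at hd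
  exact hd.2.1

lemma B_subset (I : Finset (Fin n)) (K : Set (EuclideanSpace ℝ (Fin n)))
    (hKE : K ⊆ coordSubspace I) (c : ℝ) :
    c • DI I + K ⊆ coordSubspace I := by
  rintro x hx
  rw [Set.mem_add] at hx
  obtain ⟨w, hw, y, hy, rfl⟩ := hx
  obtain ⟨d, hd, rfl⟩ := hw
  intro i hi
  show c • d i + y i = 0
  rw [DI_zero I hd i hi, hKE hy i hi, smul_zero, add_zero]

lemma embedI_restr (I : Finset (Fin n)) {x : EuclideanSpace ℝ (Fin n)}
    (hx : x ∈ coordSubspace I) : embedI I (fun i => x ↑i) = x := by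
  ext j
  simp only [embedI, PiLp.toLp_apply]
  split
  · rfl
  · exact (hx j (by assumption)).symm

lemma restr_embedI (I : Finset (Fin n)) (v : (↥I : Type) → ℝ) (i : ↥I) :
    embedI I v ↑i = v i := by
  simp only [embedI, PiLp.toLp_apply]
  rw [dif_pos i.2]

lemma smulDI_mono (I : Finset (Fin n)) {c c' : ℝ} (h0 : 0 ≤ c) (h : c ≤ c') :
    c • DI I ⊆ c' • DI I := by
  simp only [DI]
  rw [smul_simplex_char I h0, smul_simplex_char I (h0.trans h)]
  rintro x ⟨a, b, hs⟩
  exact ⟨a, b, hs.trans h⟩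

lemma Cset_mono (I : Finset (Fin n)) (K : Set (EuclideanSpace ℝ (Fin n)))
    {c c' : ℝ} (h0 : 0 ≤ c) (h : c ≤ c') : Cset I K c ⊆ Cset I K c' :=
  fun _ hv => Set.add_subset_add (smulDI_mono I h0 h) Set.Subset.rfl hv

lemma Cset_eq_image (I : Finset (Fin n)) (K : Set (EuclideanSpace ℝ (Fin n)))
    (hKE : K ⊆ coordSubspace I) (c : ℝ) :
    (fun (x : EuclideanSpace ℝ (Fin n)) => (fun i : ↥I => x ↑i)) '' (c • DI I + K)
      = Cset I K c := by
  ext v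
  constructor
  · rintro ⟨x, hx, rfl⟩
    have heq : embedI I (fun i : ↥I => x ↑i) = x := embedI_restr I (B_subset I K hKE c hx)
    show embedI I (fun i : ↥I => x ↑i) ∈ c • DI I + K
    rw [heq]
    exact hx
  · intro hv
    exact ⟨embedI I v, hv, funext fun i => restr_embedI I v i⟩

lemma isCompact_DI (I : Finset (Fin n)) : IsCompact (DI I) :=
  (((Set.toFinite (↑I : Set (Fin n))).image _).insert 0).isCompact_convexHull ℝ

lemma continuous_restr (I : Finset (Fin n)) :
    Continuous (fun (x : EuclideanSpace ℝ (Fin n)) => (fun i : ↥I => x ↑i)) :=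
  continuous_pi fun i =>
    (continuous_apply (↑i : Fin n)).comp (EuclideanSpace.equiv (Fin n) ℝ).continuous

lemma continuous_psi (I : Finset (Fin n)) : Continuous (psiMap I) :=
  Continuous.prodMk
    (continuous_pi fun i =>
      (continuous_apply (↑i : Fin n)).comp (EuclideanSpace.equiv (Fin n) ℝ).continuous)
    (continuous_restr I)

lemma measurableSet_Sset (I : Finset (Fin n)) : MeasurableSet (Sset I) := by
  have : Sset I = (⋂ i, {u : (↥(Iᶜ) : Type) → ℝ | 0 ≤ u i}) ∩
      {u : (↥(Iᶜ) : Type) → ℝ | ∑ i, u i ≤ 1} := by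
    ext u
    simp [Sset, Set.mem_iInter]
  rw [this]
  exact MeasurableSet.inter
    (MeasurableSet.iInter fun i => measurableSet_le measurable_const (measurable_pi_apply i))
    (measurableSet_le (Finset.measurable_sum _ (fun i _ => measurable_pi_apply i))
      measurable_const)

lemma volume_A (I : Finset (Fin n)) (K : Set (EuclideanSpace ℝ (Fin n)))
    (hKcomp : IsCompact K) (hKE : K ⊆ coordSubspace I) :
    volume (coordSimplex (Fin n) + K)
      = ∫⁻ u in Sset I, volume (Cset I K (1 - ∑ i, u i)) := by
  classical
  set T : Set (((↥(Iᶜ) : Type) → ℝ) × ((↥I : Type) → ℝ)) :=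
    {p | p.1 ∈ Sset I ∧ embedI I p.2 ∈ (1 - ∑ i, p.1 i) • DI I + K} with hT
  have hA : psiMap I ⁻¹' T = coordSimplex (Fin n) + K := by
    rw [coordSimplex, main_set_eq I K hKE]
    ext x
    simp only [Set.mem_preimage, hT, Set.mem_setOf_eq, psiMap, Sset]
    constructor
    · rintro ⟨⟨hpos, hle⟩, hmem⟩
      rw [Finset.sum_coe_sort Iᶜ (fun i => x i)] at hle hmem
      refine ⟨fun i hi => hpos ⟨i, Finset.mem_compl.mpr hi⟩, hle, ?_⟩
      have : embedI I (fun i : ↥I => x ↑i) = coordProj I x := by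
        ext j
        simp only [embedI, coordProj, PiLp.toLp_apply]
        split <;> simp_all
      rwa [this] at hmem
    · rintro ⟨hpos, hle, hmem⟩
      rw [← Finset.sum_coe_sort Iᶜ (fun i => x i)] at hle hmem
      refine ⟨⟨fun i => hpos ↑i (Finset.mem_compl.mp i.2), hle⟩, ?_⟩
      have : embedI I (fun i : ↥I => x ↑i) = coordProj I x := by
        ext j
        simp only [embedI, coordProj, PiLp.toLp_apply]
        split <;> simp_all
      rwa [this]
  have hAcomp : IsCompact (coordSimplex (Fin n) + K) := by
    refine IsCompact.add ?_ hKcomp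
    exact ((Set.finite_range _).insert 0).isCompact_convexHull ℝ
  have hsurj : Function.Surjective (psiMap I) := by
    intro p
    refine ⟨(WithLp.toLp 2 (fun j => if h : j ∈ I then p.2 ⟨j, h⟩ else p.1 ⟨j, Finset.mem_compl.mpr h⟩) :
      EuclideanSpace ℝ (Fin n)), ?_⟩
    refine Prod.ext ?_ ?_
    · funext i
      show (if h : (↑i : Fin n) ∈ I then _ else _) = p.1 i
      rw [dif_neg (Finset.mem_compl.mp i.2)]
    · funext i
      show (if h : (↑i : Fin n) ∈ I then _ else _) = p.2 i
      rw [dif_pos i.2]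
  have hTeq : psiMap I '' (coordSimplex (Fin n) + K) = T := by
    rw [← hA, Set.image_preimage_eq T hsurj]
  have hTcomp : IsCompact T := hTeq ▸ hAcomp.image (continuous_psi I)
  have hTmeas : MeasurableSet T := hTcomp.isClosed.measurableSet
  have hψ := psi_measurePreserving I
  calc volume (coordSimplex (Fin n) + K)
      = volume (psiMap I ⁻¹' T) := by rw [hA]
    _ = (Measure.map (psiMap I) volume) T := (Measure.map_apply hψ.measurable hTmeas).symm
    _ = volume T := by rw [hψ.map_eq]
    _ = (Measure.prod volume volume) T := by rw [← Measure.volume_eq_prod]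
    _ = ∫⁻ u, volume (Prod.mk u ⁻¹' T) := Measure.prod_apply hTmeas
    _ = ∫⁻ u, (Sset I).indicator (fun u => volume (Cset I K (1 - ∑ i, u i))) u := by
        apply lintegral_congr
        intro u
        by_cases hu : u ∈ Sset I
        · rw [Set.indicator_of_mem hu]
          congr 1
          ext v
          simp only [Set.mem_preimage, hT, Set.mem_setOf_eq, Cset, hu, true_and]
        · rw [Set.indicator_of_notMem hu]
          have : Prod.mk u ⁻¹' T = ∅ := by
            ext v
            simp only [Set.mem_preimage, hT, Set.mem_setOf_eq, Set.mem_empty_iff_false,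
              iff_false]
            rintro ⟨h, -⟩
            exact hu h
          rw [this, measure_empty]
    _ = ∫⁻ u in Sset I, volume (Cset I K (1 - ∑ i, u i)) :=
        lintegral_indicator (measurableSet_Sset I) _

lemma vol_restrict (I : Finset (Fin n)) (K : Set (EuclideanSpace ℝ (Fin n)))
    (hKE : K ⊆ coordSubspace I) (c : ℝ) :
    volume (restrictCoords I '' (c • DI I + K)) = volume (Cset I K c) := by
  have hmp := (EuclideanSpace.volume_preserving_symm_measurableEquiv_toLp (↥I : Type)).symm
  rw [← hmp.map_eq, MeasurableEquiv.map_apply]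
  congr 1
  ext v
  simp only [Set.mem_preimage, Set.mem_image]
  constructor
  · rintro ⟨x, hx, hxv⟩
    have hv : v = fun i : ↥I => x ↑i := by
      funext i
      exact (congrFun (congrArg WithLp.ofLp hxv) i).symm
    show embedI I v ∈ c • DI I + K
    rw [hv, embedI_restr I (B_subset I K hKE c hx)]
    exact hx
  · intro hv
    exact ⟨embedI I v, hv, (WithLp.ext_iff 2).2 (funext fun i => restr_embedI I v i)⟩

lemma rhs_transport (I : Finset (Fin n)) (K : Set (EuclideanSpace ℝ (Fin n)))
    (hKE : K ⊆ coordSubspace I) :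
    (∫ t in coordSimplex (↥(Iᶜ) : Type),
        (volume (restrictCoords I ''
          ((1 - ∑ i, t i) • convexHull ℝ
              (insert 0 ((fun i : Fin n => EuclideanSpace.single i (1 : ℝ)) '' ↑I))
            + K))).toReal)
      = ∫ u in Sset I, (volume (Cset I K (1 - ∑ i, u i))).toReal := by
  classical
  have hmp := (EuclideanSpace.volume_preserving_symm_measurableEquiv_toLp (↥(Iᶜ) : Type)).symm
  have hkey := hmp.setIntegral_preimage_emb
    (MeasurableEquiv.measurableEmbedding _)
    (fun t : EuclideanSpace ℝ (↥(Iᶜ) : Type) =>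
      (volume (restrictCoords I ''
          ((1 - ∑ i, t i) • convexHull ℝ
              (insert 0 ((fun i : Fin n => EuclideanSpace.single i (1 : ℝ)) '' ↑I))
            + K))).toReal)
    (coordSimplex (↥(Iᶜ) : Type))
  rw [← hkey]
  have hpre : (MeasurableEquiv.toLp 2 ((↥(Iᶜ) : Type) → ℝ)).symm.symm ⁻¹'
      (coordSimplex (↥(Iᶜ) : Type)) = Sset I := by
    ext u
    rw [Set.mem_preimage, coordSimplex, coordSimplex_char]
    exact Iff.rfl
  rw [hpre]
  apply MeasureTheory.setIntegral_congr_fun (measurableSet_Sset I)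
  intro u _
  show (volume (restrictCoords I '' (_ • DI I + K))).toReal = _
  rw [vol_restrict I K hKE]
  rfl

end Main

/-- **Fubini for a simplex plus a lower-dimensional body (Fact 4.1).**
Let `E = span{e_{n-k+1}, …, e_n}` and `K ⊆ E` a convex body. Then
`Vol_n(Δₙ + K) = ∫_{t ∈ Δ_{n-k}} Vol_k((1 - ∑ tᵢ)Δ_E + K) dt`,
where `Δ_E = conv{0, e_{n-k+1}, …, e_n}` and `Vol_k` is Lebesgue measure on `E`
(computed via restriction of coordinates to `I`). -/
theorem volume_simplex_add_lower_dim
    (n k : ℕ) (hk : k ≤ n)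
    (I : Finset (Fin n)) (hI : I = Finset.univ.filter (fun i : Fin n => n - k ≤ (i : ℕ)))
    (K : Set (EuclideanSpace ℝ (Fin n)))
    (hKconv : Convex ℝ K) (hKcomp : IsCompact K) (hKne : K.Nonempty)
    (hKE : K ⊆ coordSubspace I) :
    (volume (coordSimplex (Fin n) + K)).toReal =
      ∫ t in coordSimplex ↥(Iᶜ),
        (volume (restrictCoords I ''
          ((1 - ∑ i, t i) • convexHull ℝ
              (insert 0 ((fun i : Fin n => EuclideanSpace.single i (1 : ℝ)) '' ↑I))
            + K))).toReal := by
  classical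
  rw [rhs_transport I K hKE, volume_A I K hKcomp hKE]
  set F : ((↥(Iᶜ) : Type) → ℝ) → ENNReal := fun u => volume (Cset I K (1 - ∑ i, u i)) with hF
  set g : ℝ → ENNReal := fun s => volume (Cset I K (1 - min (max s 0) 1)) with hg
  have hganti : Antitone g := by
    intro s s' hss
    apply measure_mono
    apply Cset_mono I K
    · have h1 : min (max s' 0) 1 ≤ 1 := min_le_right _ _
      linarith
    · have : min (max s 0) 1 ≤ min (max s' 0) 1 := by gcongr
      linarith
  have hgmeas : Measurable g := hganti.measurable
  have hsum : Measurable (fun u : (↥(Iᶜ) : Type) → ℝ => ∑ i, u i) :=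
    Finset.measurable_sum _ (fun i _ => measurable_pi_apply i)
  have hfin : ∀ s, g s ≤ volume (Cset I K 1) := by
    intro s
    apply measure_mono
    apply Cset_mono I K
    · have h1 : min (max s 0) 1 ≤ 1 := min_le_right _ _
      linarith
    · have h2 : 0 ≤ min (max s 0) 1 := le_min (le_max_right _ _) zero_le_one
      linarith
  have hC1 : volume (Cset I K 1) < ⊤ := by
    rw [← Cset_eq_image I K hKE 1]
    exact ((((isCompact_DI I).smul (1:ℝ)).add hKcomp).image (continuous_restr I)).measure_lt_top
  have hEq : ∀ u ∈ Sset I, F u = g (∑ i, u i) := by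
    rintro u ⟨h1, h2⟩
    have h0 : 0 ≤ ∑ i, u i := Finset.sum_nonneg fun i _ => h1 i
    simp only [hF, hg]
    rw [max_eq_left h0, min_eq_left h2]
  rw [setLIntegral_congr_fun (measurableSet_Sset I)
    (fun u hu => hEq u hu)]
  rw [MeasureTheory.setIntegral_congr_fun (measurableSet_Sset I)
    (fun u hu => by rw [show (volume (Cset I K (1 - ∑ i, u i))).toReal = (F u).toReal from rfl,
      hEq u hu])]
  exact (integral_toReal ((hgmeas.comp hsum).aemeasurable)
    (Filter.Eventually.of_forall fun u => lt_of_le_of_lt (hfin _) hC1)).symm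
end
end
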